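/- arXiv:1811.11438 — 9 statements merged into one kernel-verified Lean document; each statement's English description precedes it below -/
import Mathlib

section
/- Let $n, k$ be positive integers with $n \geq 2k+1$. The Kneser graph $KG(n,k)$ contains a cycle of odd length $2\lceil k/(n-2k) \rceil + 1$. -/
/-- The Kneser graph `KG(n,k)`: vertices are the `k`-element subsets of
`{1, …, n}` (modelled as `Fin n`), two vertices being adjacent iff the
corresponding subsets are disjoint. -/
def kneserGraph (n k : ℕ) : SimpleGraph {A : Finset (Fin n) // A.card = k} where
  Adj X Y := X ≠ Y ∧ Disjoint X.1 Y.1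
  symm := ⟨fun _ _ h => ⟨h.1.symm, h.2.symm⟩⟩
  loopless := ⟨fun _ h => h.1 rfl⟩

namespace KneserOdd

def circInt (n k a : ℕ) (hn : 0 < n) : Finset (Fin n) :=
  (Finset.range k).image (fun u => ⟨(a + u) % n, Nat.mod_lt _ hn⟩)

lemma mem_circInt {n k a : ℕ} {hn : 0 < n} {x : Fin n} :
    x ∈ circInt n k a hn ↔ ∃ u, u < k ∧ (a + u) % n = x.val := by
  simp [circInt, Fin.ext_iff]

lemma circInt_card {n k a : ℕ} (hn : 0 < n) (hkn : k ≤ n) :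
    (circInt n k a hn).card = k := by
  rw [circInt, Finset.card_image_of_injOn, Finset.card_range]
  intro u hu u' hu' h
  simp only [Finset.coe_range, Set.mem_Iio] at hu hu'
  have h2 : (a + u) % n = (a + u') % n := by
    simpa [Fin.ext_iff] using h
  have h3 : u % n = u' % n := Nat.ModEq.add_left_cancel' a h2
  rwa [Nat.mod_eq_of_lt (lt_of_lt_of_le hu hkn),
    Nat.mod_eq_of_lt (lt_of_lt_of_le hu' hkn)] at h3

lemma circInt_disjoint {n k a s : ℕ} (hn : 0 < n) (h1 : k ≤ s) (h2 : s + k ≤ n) :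
    Disjoint (circInt n k a hn) (circInt n k (a + s) hn) := by
  rw [Finset.disjoint_left]
  rintro x hx hx'
  obtain ⟨u, hu, hxe⟩ := mem_circInt.mp hx
  obtain ⟨u', hu', hxe'⟩ := mem_circInt.mp hx'
  have h3 : (a + u) % n = (a + (s + u')) % n := by
    rw [hxe, ← add_assoc, hxe']
  have h5 : u % n = (s + u') % n := Nat.ModEq.add_left_cancel' a h3
  rw [Nat.mod_eq_of_lt (by omega), Nat.mod_eq_of_lt (by omega)] at h5
  omega

lemma circInt_mod {n k a : ℕ} (hn : 0 < n) :
    circInt n k (a % n) hn = circInt n k a hn := by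
  unfold circInt
  congr 1
  funext u
  simp [Fin.ext_iff, Nat.mod_add_mod]

lemma circInt_inj {n k a b : ℕ} (hn : 0 < n) (hk : 0 < k) (h2k : 2 * k < n)
    (h : circInt n k a hn = circInt n k b hn) : a % n = b % n := by
  have ha : (⟨a % n, Nat.mod_lt _ hn⟩ : Fin n) ∈ circInt n k a hn :=
    mem_circInt.mpr ⟨0, hk, by simp⟩
  have hb : (⟨b % n, Nat.mod_lt _ hn⟩ : Fin n) ∈ circInt n k b hn :=
    mem_circInt.mpr ⟨0, hk, by simp⟩
  rw [h] at ha
  rw [← h] at hb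
  obtain ⟨u, hu, hue⟩ := mem_circInt.mp ha
  obtain ⟨u', hu', hue'⟩ := mem_circInt.mp hb
  simp only at hue hue'
  have h1 : b + u ≡ a [MOD n] := hue
  have h2 : a + u' ≡ b [MOD n] := hue'
  have h3 : (a + b) + (u + u') ≡ (a + b) + 0 [MOD n] := by
    have := h1.add h2
    calc (a + b) + (u + u') = (b + u) + (a + u') := by ring
    _ ≡ a + b [MOD n] := this
    _ = (a + b) + 0 := by ring
  have h4 : u + u' ≡ 0 [MOD n] := Nat.ModEq.add_left_cancel' _ h3
  have h5 : (u + u') % n = 0 := by simpa [Nat.ModEq] using h4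
  have h6 : u + u' = 0 := by
    rw [Nat.mod_eq_of_lt (by omega)] at h5; exact h5
  have hu0 : u = 0 := by omega
  rw [hu0, add_zero] at h1
  exact h1.symm

def chainWalk {V : Type*} {G : SimpleGraph V} (f : ℕ → V)
    (h : ∀ j, G.Adj (f (j + 1)) (f j)) : (m : ℕ) → G.Walk (f m) (f 0)
  | 0 => .nil
  | (m + 1) => .cons (h m) (chainWalk f h m)

lemma chainWalk_length {V : Type*} {G : SimpleGraph V} (f : ℕ → V)
    (h : ∀ j, G.Adj (f (j + 1)) (f j)) (m : ℕ) : (chainWalk f h m).length = m := by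
  induction m with
  | zero => rfl
  | succ m ih => simp [chainWalk, ih]

lemma chainWalk_support {V : Type*} {G : SimpleGraph V} (f : ℕ → V)
    (h : ∀ j, G.Adj (f (j + 1)) (f j)) (m : ℕ) :
    (chainWalk f h m).support = ((List.range (m + 1)).reverse).map f := by
  induction m with
  | zero => simp [chainWalk, List.range_succ]
  | succ m ih => simp [chainWalk, ih, List.range_succ]

lemma chainWalk_edges_mem {V : Type*} {G : SimpleGraph V} (f : ℕ → V)
    (h : ∀ j, G.Adj (f (j + 1)) (f j)) (m : ℕ) {e : Sym2 V}
    (he : e ∈ (chainWalk f h m).edges) : ∃ i, i < m ∧ e = s(f (i + 1), f i) := by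
  induction m with
  | zero => simp [chainWalk] at he
  | succ m ih =>
    simp only [chainWalk, SimpleGraph.Walk.edges_cons, List.mem_cons] at he
    rcases he with he | he
    · exact ⟨m, by omega, he⟩
    · obtain ⟨i, hi, hie⟩ := ih he
      exact ⟨i, by omega, hie⟩

end KneserOdd

/-- The Kneser graph `KG(n,k)` with `n ≥ 2k+1` contains a cycle of odd length
`2⌈k/(n-2k)⌉ + 1`. -/
theorem kneser_has_odd_cycle (n k : ℕ) (hk : 0 < k) (hn : 2 * k + 1 ≤ n) :
    ∃ (v : {A : Finset (Fin n) // A.card = k}) (w : (kneserGraph n k).Walk v v),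
      w.IsCycle ∧ w.length = 2 * (⌈(k : ℚ) / ((n : ℚ) - 2 * k)⌉).toNat + 1 := by
  classical
  have hn0 : 0 < n := by omega
  have hkn : k ≤ n := by omega
  set d : ℕ := n - 2 * k with hdd
  have hd0 : 0 < d := by omega
  have hnd : n = 2 * k + d := by omega
  obtain ⟨q, r, hq, hr⟩ : ∃ q r, k - 1 = d * q + r ∧ r < d :=
    ⟨(k - 1) / d, (k - 1) % d, (Nat.div_add_mod (k - 1) d).symm, Nat.mod_lt _ hd0⟩
  set t : ℕ := q + 1 with htq
  have hm1 : t * d = d * q + d := by rw [htq]; ring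
  have hm2 : (t - 1) * d = d * q := by rw [htq, Nat.add_sub_cancel, Nat.mul_comm]
  have ht1 : k ≤ t * d := by omega
  have ht2 : (t - 1) * d < k := by omega
  -- gcd setup
  set g : ℕ := Nat.gcd n k with hgdef
  have hg0 : 0 < g := Nat.gcd_pos_of_pos_right _ hk
  have hgk : g ∣ k := Nat.gcd_dvd_right n k
  have hgn : g ∣ n := Nat.gcd_dvd_left n k
  have hgd : g ∣ d := by
    have : g ∣ 2 * k := hgk.mul_left 2
    exact hdd ▸ Nat.dvd_sub hgn this
  set k' : ℕ := k / g with hk'def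
  have hkk' : g * k' = k := Nat.mul_div_cancel' hgk
  have hco : Nat.Coprime (n / g) k' := Nat.coprime_div_gcd_div_gcd hg0
  have hdg1 : 1 ≤ d / g := Nat.one_le_div_iff hg0 |>.mpr (Nat.le_of_dvd hd0 hgd)
  have hgdm : g * (d / g) = d := Nat.mul_div_cancel' hgd
  have hng : n / g = 2 * k' + d / g := by
    have h1 : n = g * (2 * k' + d / g) := by
      have e1 : 2 * (g * k') + g * (d / g) = g * (2 * k' + d / g) := by ring
      rw [← e1, hkk', hgdm]
      omega
    rw [h1, Nat.mul_div_cancel_left _ hg0]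
  have hkd' : k ≤ k' * d := by
    calc k = k * 1 := (Nat.mul_one k).symm
      _ ≤ k * (d / g) := Nat.mul_le_mul_left k hdg1
      _ = (g * k') * (d / g) := by rw [hkk']
      _ = k' * (g * (d / g)) := by ring
      _ = k' * d := by rw [hgdm]
  have htk' : t ≤ k' := by
    by_contra hcon
    push_neg at hcon
    have h1 : k' ≤ q := by omega
    have h2 : k' * d ≤ q * d := Nat.mul_le_mul_right d h1
    have h3 : q * d = d * q := Nat.mul_comm q d
    omega
  have hnd2 : ∀ c, 0 < c → c ≤ 2 * t → ¬ (n ∣ c * k) := by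
    intro c hc1 hc2 hdvd
    obtain ⟨m, hm⟩ := hdvd
    have hng' : g * (n / g) = n := Nat.mul_div_cancel' hgn
    have h1 : g * (c * k') = g * ((n / g) * m) := by
      calc g * (c * k') = c * (g * k') := by ring
      _ = c * k := by rw [hkk']
      _ = n * m := hm
      _ = (g * (n / g)) * m := by rw [hng']
      _ = g * ((n / g) * m) := by ring
    have h2 : c * k' = (n / g) * m := Nat.eq_of_mul_eq_mul_left hg0 h1
    have h3 : n / g ∣ c * k' := ⟨m, h2⟩
    have h4 : n / g ∣ c := hco.dvd_of_dvd_mul_right h3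
    have h5 : n / g ≤ c := Nat.le_of_dvd hc1 h4
    omega
  -- injectivity of starts
  have finjlem : ∀ i j : ℕ, i ≤ j → j ≤ 2 * t →
      KneserOdd.circInt n k (i * k) hn0 = KneserOdd.circInt n k (j * k) hn0 → i = j := by
    intro i j hij hj2 hcc
    have hmod : i * k ≡ j * k [MOD n] := KneserOdd.circInt_inj hn0 hk (by omega) hcc
    have hdvd : n ∣ j * k - i * k :=
      (Nat.modEq_iff_dvd' (Nat.mul_le_mul_right _ hij)).mp hmod
    have hsub : j * k - i * k = (j - i) * k := (Nat.sub_mul j i k).symm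
    rw [hsub] at hdvd
    by_contra hne
    exact hnd2 (j - i) (by omega) (by omega) hdvd
  -- vertices
  let f : ℕ → {A : Finset (Fin n) // A.card = k} :=
    fun j => ⟨KneserOdd.circInt n k (j * k) hn0, KneserOdd.circInt_card hn0 hkn⟩
  have hadj : ∀ j, (kneserGraph n k).Adj (f (j + 1)) (f j) := by
    intro j
    constructor
    · intro he
      have hcc : KneserOdd.circInt n k ((j+1) * k) hn0 = KneserOdd.circInt n k (j * k) hn0 :=
        congrArg Subtype.val he
      have hmod : j * k ≡ (j+1) * k [MOD n] :=
        (KneserOdd.circInt_inj hn0 hk (by omega) hcc).symm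
      have hdvd : n ∣ (j+1) * k - j * k :=
        (Nat.modEq_iff_dvd' (Nat.mul_le_mul_right _ (by omega))).mp hmod
      have hsub : (j+1) * k - j * k = k := by
        rw [Nat.add_mul, Nat.one_mul]; omega
      rw [hsub] at hdvd
      have := Nat.le_of_dvd hk hdvd
      omega
    · have hdisj := KneserOdd.circInt_disjoint (n := n) (k := k) (a := j * k) (s := k)
        hn0 le_rfl (by omega)
      have he : j * k + k = (j + 1) * k := by ring
      rw [he] at hdisj
      exact hdisj.symm
  have hadj0 : (kneserGraph n k).Adj (f 0) (f (2 * t)) := by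
    constructor
    · intro he
      have := finjlem 0 (2 * t) (by omega) le_rfl (congrArg Subtype.val he)
      omega
    · have h1 := KneserOdd.circInt_disjoint (n := n) (k := k) (a := 2 * t * k) (s := t * d)
        hn0 ht1 (by omega)
      have he : 2 * t * k + t * d = t * n := by rw [hnd]; ring
      have h2 : KneserOdd.circInt n k (2 * t * k + t * d) hn0
          = KneserOdd.circInt n k (0 * k) hn0 := by
        rw [he, ← KneserOdd.circInt_mod (a := t * n) hn0, Nat.mul_mod_left, Nat.zero_mul]
      rw [h2] at h1
      exact h1.symm
  let w : (kneserGraph n k).Walk (f 0) (f 0) :=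
    SimpleGraph.Walk.cons hadj0 (KneserOdd.chainWalk f hadj (2 * t))
  have hfinj : ∀ i j : ℕ, i ≤ 2 * t → j ≤ 2 * t → f i = f j → i = j := by
    intro i j hi hj hf
    rcases le_total i j with h | h
    · exact finjlem i j h hj (congrArg Subtype.val hf)
    · exact (finjlem j i h hi (congrArg Subtype.val hf.symm)).symm
  refine ⟨f 0, w, ?_, ?_⟩
  · rw [SimpleGraph.Walk.cons_isCycle_iff]
    constructor
    · rw [SimpleGraph.Walk.isPath_def, KneserOdd.chainWalk_support]
      apply List.Nodup.map_on
      · intro x hx y hy hxy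
        rw [List.mem_reverse, List.mem_range] at hx hy
        exact hfinj x y (by omega) (by omega) hxy
      · exact List.nodup_reverse.mpr List.nodup_range
    · intro hmem
      obtain ⟨i, hi, hie⟩ := KneserOdd.chainWalk_edges_mem f hadj (2 * t) hmem
      rcases Sym2.eq_iff.mp hie with ⟨h1, h2⟩ | ⟨h1, h2⟩
      · have := hfinj 0 (i + 1) (by omega) (by omega) h1
        omega
      · have e1 := hfinj 0 i (by omega) (by omega) h1
        have e2 := hfinj (2 * t) (i + 1) (by omega) (by omega) h2
        omega
  · have hlen : w.length = 2 * t + 1 := by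
      show (SimpleGraph.Walk.cons hadj0 (KneserOdd.chainWalk f hadj (2 * t))).length = 2 * t + 1
      rw [SimpleGraph.Walk.length_cons, KneserOdd.chainWalk_length]
    rw [hlen]
    have hc1 : ((n : ℚ) - 2 * k) = (d : ℚ) := by
      rw [hnd]; push_cast; ring
    have hdq : (0 : ℚ) < (d : ℚ) := by exact_mod_cast hd0
    have hceil : ⌈(k : ℚ) / ((n : ℚ) - 2 * k)⌉ = (t : ℤ) := by
      rw [hc1, Int.ceil_eq_iff]
      constructor
      · rw [lt_div_iff₀ hdq]
        have hnat : q * d < k := by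
          have hcm : q * d = d * q := Nat.mul_comm q d
          omega
        push_cast [htq]
        have he2 : ((q : ℚ) + 1 - 1) * d = (q : ℚ) * d := by ring
        rw [he2]
        exact_mod_cast hnat
      · rw [div_le_iff₀ hdq]
        exact_mod_cast ht1
    rw [hceil, Int.toNat_natCast]
end

section
/- Let $n, k$ be positive integers with $n \geq 2k+1$. Every closed walk of odd length in the Kneser graph $KG(n,k)$ has length at least $2\lceil k/(n-2k) \rceil + 1$. (Consequently, the smallest odd cycle of $KG(n,k)$ has length exactly $2\lceil k/(n-2k) \rceil + 1$.) -/
open SimpleGraph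

section Helpers

/-- even-indexed vertex set of the odd cycle: the interval `[j*t, j*t+k)`. -/
def kSetE (n k t M : ℕ) (hb : M * t + k ≤ n) (j : ℕ) : Finset (Fin n) :=
  (Finset.Ico ((min j M) * t) ((min j M) * t + k)).attachFin fun m hm => by
    rw [Finset.mem_Ico] at hm
    have h1 : (min j M) * t ≤ M * t := Nat.mul_le_mul_right t (min_le_right j M)
    omega

theorem kSetE_card (n k t M : ℕ) (hb : M * t + k ≤ n) (j : ℕ) :
    (kSetE n k t M hb j).card = k := by
  rw [kSetE, Finset.card_attachFin, Nat.card_Ico]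
  omega

theorem kSetE_mem (n k t M : ℕ) (hb : M * t + k ≤ n) {j : ℕ} (hj : j ≤ M) (x : Fin n) :
    x ∈ kSetE n k t M hb j ↔ j * t ≤ x.val ∧ x.val < j * t + k := by
  rw [kSetE, Finset.mem_attachFin, Finset.mem_Ico, min_eq_left hj]

/-- odd-indexed vertex set of the odd cycle: `[0, j*t) ∪ [j*t+t+k, n)`. -/
def kSetO (n k t M : ℕ) (hb : M * t + k ≤ n) (j : ℕ) : Finset (Fin n) :=
  ((Finset.Ico 0 ((min j (M - 1)) * t)) ∪
      (Finset.Ico ((min j (M - 1)) * t + t + k) n)).attachFin fun m hm => by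
    rw [Finset.mem_union, Finset.mem_Ico, Finset.mem_Ico] at hm
    have h1 : (min j (M - 1)) * t ≤ M * t :=
      Nat.mul_le_mul_right t (by have := min_le_right j (M - 1); omega)
    omega

theorem kSetO_card (n k t M : ℕ) (hb : M * t + k ≤ n) (hM : 1 ≤ M) (ht : 1 ≤ t)
    (hn2 : n = 2 * k + t) (j : ℕ) : (kSetO n k t M hb j).card = k := by
  have h1 : (min j (M - 1)) * t ≤ (M - 1) * t := Nat.mul_le_mul_right t (min_le_right _ _)
  have h2 : (M - 1) * t = M * t - t := Nat.sub_one_mul M t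
  have h3 : 1 * t ≤ M * t := Nat.mul_le_mul_right t hM
  rw [one_mul] at h3
  rw [kSetO, Finset.card_attachFin, Finset.card_union_of_disjoint, Nat.card_Ico, Nat.card_Ico]
  · omega
  · rw [Finset.disjoint_left]
    intro a ha hb'
    rw [Finset.mem_Ico] at ha hb'
    omega

theorem kSetO_mem (n k t M : ℕ) (hb : M * t + k ≤ n) {j : ℕ} (hj : j ≤ M - 1) (x : Fin n) :
    x ∈ kSetO n k t M hb j ↔ x.val < j * t ∨ j * t + t + k ≤ x.val := by
  rw [kSetO, Finset.mem_attachFin, Finset.mem_union, Finset.mem_Ico, Finset.mem_Ico,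
    min_eq_left hj]
  have := x.isLt
  omega

end Helpers

def chainWalk {V : Type*} (G : SimpleGraph V) (f : ℕ → V) (N : ℕ)
    (hadj : ∀ i, i + 1 < N → G.Adj (f i) (f (i + 1)))
    (hlast : G.Adj (f (N - 1)) (f 0)) :
    (r : ℕ) → 1 ≤ r → r ≤ N → G.Walk (f (N - r)) (f 0)
  | 0, h1, _ => absurd h1 (by omega)
  | 1, _, _ => Walk.cons hlast Walk.nil
  | (r + 2), _, h2 =>
      Walk.cons
        (by
          have e : N - (r + 2) + 1 = N - (r + 1) := by omega
          rw [← e]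
          exact hadj _ (by omega))
        (chainWalk G f N hadj hlast (r + 1) (by omega) (by omega))

theorem chainWalk_length {V : Type*} (G : SimpleGraph V) (f : ℕ → V) (N : ℕ)
    (hadj : ∀ i, i + 1 < N → G.Adj (f i) (f (i + 1)))
    (hlast : G.Adj (f (N - 1)) (f 0)) :
    ∀ (r : ℕ) (h1 : 1 ≤ r) (h2 : r ≤ N),
      (chainWalk G f N hadj hlast r h1 h2).length = r
  | 0, h1, _ => absurd h1 (by omega)
  | 1, _, _ => by simp [chainWalk]
  | (r + 2), _, h2 => by
      rw [chainWalk]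
      simp [chainWalk_length G f N hadj hlast (r + 1) (by omega) (by omega)]

theorem chainWalk_support {V : Type*} (G : SimpleGraph V) (f : ℕ → V) (N : ℕ)
    (hadj : ∀ i, i + 1 < N → G.Adj (f i) (f (i + 1)))
    (hlast : G.Adj (f (N - 1)) (f 0)) :
    ∀ (r : ℕ) (h1 : 1 ≤ r) (h2 : r ≤ N),
      (chainWalk G f N hadj hlast r h1 h2).support
        = ((List.range r).map fun j => f (N - r + j)) ++ [f 0]
  | 0, h1, _ => absurd h1 (by omega)
  | 1, _, _ => by
      rw [chainWalk]
      simp [List.range_succ]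
  | (r + 2), _, h2 => by
      have key : List.map (fun j => f (N - (r + 2) + j)) (List.range (r + 2))
          = f (N - (r + 2)) :: List.map (fun j => f (N - (r + 1) + j)) (List.range (r + 1)) := by
        rw [List.range_succ_eq_map, List.map_cons, List.map_map]
        congr 1
        apply List.map_congr_left
        intro j _
        simp only [Function.comp_apply]
        congr 1
        omega
      rw [chainWalk, Walk.support_cons,
        chainWalk_support G f N hadj hlast (r + 1) (by omega) (by omega), key]
      simp

theorem chainWalk_edges {V : Type*} (G : SimpleGraph V) (f : ℕ → V) (N : ℕ)
    (hadj : ∀ i, i + 1 < N → G.Adj (f i) (f (i + 1)))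
    (hlast : G.Adj (f (N - 1)) (f 0)) :
    ∀ (r : ℕ) (h1 : 1 ≤ r) (h2 : r ≤ N),
      ∀ e ∈ (chainWalk G f N hadj hlast r h1 h2).edges,
        (∃ j, N - r ≤ j ∧ j + 1 ≤ N - 1 ∧ e = s(f j, f (j + 1))) ∨ e = s(f (N - 1), f 0)
  | 0, h1, _ => absurd h1 (by omega)
  | 1, _, _ => by simp [chainWalk]
  | (r + 2), _, h2 => by
      rw [chainWalk]
      intro e he
      rw [Walk.edges_cons, List.mem_cons] at he
      rcases he with he | he
      · left
        refine ⟨N - (r + 2), le_refl _, by omega, ?_⟩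
        rw [he]
        have e3 : N - (r + 1) = N - (r + 2) + 1 := by omega
        rw [e3]
      · rcases chainWalk_edges G f N hadj hlast (r + 1) (by omega) (by omega) e he with
          ⟨j, hj1, hj2, hj3⟩ | h
        · exact Or.inl ⟨j, by omega, hj2, hj3⟩
        · exact Or.inr h

theorem exists_cycle_of_seq {V : Type*} (G : SimpleGraph V) (f : ℕ → V) (N : ℕ) (hN : 3 ≤ N)
    (hadj : ∀ i, i + 1 < N → G.Adj (f i) (f (i + 1)))
    (hlast : G.Adj (f (N - 1)) (f 0))
    (hinj : ∀ i < N, ∀ j < N, f i = f j → i = j) :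
    ∃ w : G.Walk (f 0) (f 0), w.IsCycle ∧ w.length = N := by
  have e1 : N - (N - 1) = 1 := by omega
  have h0 : G.Adj (f 0) (f (N - (N - 1))) := by rw [e1]; exact hadj 0 (by omega)
  refine ⟨Walk.cons h0 (chainWalk G f N hadj hlast (N - 1) (by omega) (by omega)), ?_, ?_⟩
  · rw [Walk.cons_isCycle_iff]
    constructor
    · apply Walk.IsPath.mk'
      rw [chainWalk_support]
      rw [List.nodup_append]
      refine ⟨?_, List.nodup_singleton _, ?_⟩
      · apply List.Nodup.map_on
        · intro x hx y hy hxy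
          rw [List.mem_range] at hx hy
          have := hinj (N - (N - 1) + x) (by omega) (N - (N - 1) + y) (by omega) hxy
          omega
        · exact List.nodup_range
      · intro a ha b hb
        rw [List.mem_map] at ha
        obtain ⟨x, hx, rfl⟩ := ha
        rw [List.mem_range] at hx
        rw [List.mem_singleton] at hb; subst hb; intro hb
        have := hinj (N - (N - 1) + x) (by omega) 0 (by omega) hb
        omega
    · intro hmem
      rcases chainWalk_edges G f N hadj hlast (N - 1) (by omega) (by omega) _ hmem with
        ⟨j, hj1, hj2, hj3⟩ | h
      · rw [Sym2.eq_iff] at hj3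
        rcases hj3 with ⟨ha, hb⟩ | ⟨ha, hb⟩
        · have := hinj 0 (by omega) j (by omega) ha
          omega
        · have := hinj 0 (by omega) (j + 1) (by omega) ha
          omega
      · rw [e1] at h
        rw [Sym2.eq_iff] at h
        rcases h with ⟨ha, hb⟩ | ⟨ha, hb⟩
        · have := hinj 1 (by omega) 0 (by omega) hb
          omega
        · have := hinj 1 (by omega) (N - 1) (by omega) hb
          omega
  · rw [Walk.length_cons, chainWalk_length]
    omega

theorem kneser_adj_of_disjoint {n k : ℕ} (hk : 0 < k) (X Y : {A : Finset (Fin n) // A.card = k})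
    (h : Disjoint X.1 Y.1) : (kneserGraph n k).Adj X Y := by
  refine ⟨?_, h⟩
  rintro rfl
  rw [disjoint_self] at h
  have := X.2
  rw [h] at this
  simp at this
  omega

/-- In `KG(n,k)` with `n ≥ 2k+1`, every closed walk of odd length has length at
least `2⌈k/(n-2k)⌉ + 1`; consequently the smallest odd cycle of `KG(n,k)` has
length exactly `2⌈k/(n-2k)⌉ + 1`. -/
theorem kneser_odd_closed_walk_length (n k : ℕ) (hk : 0 < k) (hn : 2 * k + 1 ≤ n) :
    (∀ (v : {A : Finset (Fin n) // A.card = k}) (w : (kneserGraph n k).Walk v v),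
      Odd w.length → 2 * (⌈(k : ℚ) / ((n : ℚ) - 2 * k)⌉).toNat + 1 ≤ w.length) ∧
    (∃ (v : {A : Finset (Fin n) // A.card = k}) (w : (kneserGraph n k).Walk v v),
      w.IsCycle ∧ Odd w.length ∧
        w.length = 2 * (⌈(k : ℚ) / ((n : ℚ) - 2 * k)⌉).toNat + 1) := by
  set t : ℕ := n - 2 * k with htdef
  have ht : 1 ≤ t := by omega
  have hn2 : n = 2 * k + t := by omega
  set M : ℕ := (⌈(k : ℚ) / ((n : ℚ) - 2 * k)⌉).toNat with hMdef
  have htQ : (0 : ℚ) < (t : ℚ) := by exact_mod_cast ht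
  have hcast : ((n : ℚ) - 2 * k) = (t : ℚ) := by
    rw [hn2]
    push_cast
    ring
  have hceil : ⌈(k : ℚ) / ((n : ℚ) - 2 * k)⌉ = ⌈(k : ℚ) / (t : ℚ)⌉ := by rw [hcast]
  have hc1 : 0 < ⌈(k : ℚ) / (t : ℚ)⌉ :=
    Int.ceil_pos.mpr (div_pos (by exact_mod_cast hk) htQ)
  have hMc : (M : ℤ) = ⌈(k : ℚ) / (t : ℚ)⌉ := by
    rw [hMdef, hceil]
    exact Int.toNat_of_nonneg (by omega)
  have hM1 : 1 ≤ M := by omega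
  have hkM : k ≤ M * t := by
    have h1 : (k : ℚ) / (t : ℚ) ≤ ((M : ℤ) : ℚ) := hMc ▸ Int.le_ceil _
    rw [div_le_iff₀ htQ] at h1
    exact_mod_cast h1
  have hMk : M * t < k + t := by
    have h1 : ((M : ℤ) : ℚ) < (k : ℚ) / (t : ℚ) + 1 := hMc ▸ Int.ceil_lt_add_one _
    have h2 := mul_lt_mul_of_pos_right h1 htQ
    rw [add_mul, one_mul, div_mul_cancel₀ _ (ne_of_gt htQ)] at h2
    exact_mod_cast h2
  constructor
  · -- lower bound for odd closed walks
    intro v w hodd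
    by_contra hlt
    push_neg at hlt
    obtain ⟨s, hs⟩ := hodd
    have hsM : s < M := by omega
    have hst : s * t < k := by
      have h1 : s * t ≤ (M - 1) * t := Nat.mul_le_mul_right t (by omega)
      have h2 : (M - 1) * t = M * t - t := Nat.sub_one_mul M t
      have h3 : 1 * t ≤ M * t := Nat.mul_le_mul_right t hM1
      rw [one_mul] at h3
      omega
    have claim : ∀ i, i ≤ s →
        k ≤ ((w.getVert 0).1 ∩ (w.getVert (2 * i)).1).card + i * t := by
      intro i
      induction i with
      | zero =>
        intro _
        simp only [Nat.mul_zero, Finset.inter_self, Nat.zero_mul, Nat.add_zero]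
        rw [(w.getVert 0).2]
      | succ i ih =>
        intro hi
        have ih' := ih (by omega)
        have h2i : 2 * i < w.length := by omega
        have h2i1 : 2 * i + 1 < w.length := by omega
        have a1 := w.adj_getVert_succ h2i
        have a2 := w.adj_getVert_succ h2i1
        have e2 : 2 * (i + 1) = 2 * i + 1 + 1 := by ring
        rw [e2]
        have e3 : (i + 1) * t = i * t + t := by ring
        rw [e3]
        set X := (w.getVert 0).1
        set A := (w.getVert (2 * i)).1
        set B := (w.getVert (2 * i + 1)).1
        set C := (w.getVert (2 * i + 1 + 1)).1
        have d1 : Disjoint A B := a1.2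
        have d2 : Disjoint B C := a2.2
        have hBc : Bᶜ.card = n - k := by
          rw [Finset.card_compl, (w.getVert (2 * i + 1)).2, Fintype.card_fin]
        have hsub : (X ∩ A) ∪ C ⊆ Bᶜ := by
          intro x hx
          rw [Finset.mem_union] at hx
          rw [Finset.mem_compl]
          rcases hx with hx | hx
          · exact fun hB => (Finset.disjoint_left.mp d1) (Finset.mem_of_mem_inter_right hx) hB
          · exact fun hB => (Finset.disjoint_left.mp d2) hB hx
        have hU : ((X ∩ A) ∪ C).card ≤ n - k := hBc ▸ Finset.card_le_card hsub
        have heq : ((X ∩ A) ∪ C).card + ((X ∩ A) ∩ C).card = (X ∩ A).card + C.card :=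
          Finset.card_union_add_card_inter _ _
        have hCk : C.card = k := (w.getVert (2 * i + 1 + 1)).2
        have hmono : ((X ∩ A) ∩ C).card ≤ (X ∩ C).card := by
          apply Finset.card_le_card
          intro x hx
          rw [Finset.mem_inter] at hx ⊢
          exact ⟨(Finset.mem_inter.mp hx.1).1, hx.2⟩
        omega
    have hfin := claim s le_rfl
    have alast := w.adj_getVert_succ (show 2 * s < w.length by omega)
    have hgl : w.getVert (2 * s + 1) = v := by
      rw [show 2 * s + 1 = w.length by omega, Walk.getVert_length]
    rw [hgl] at alast
    have hdisj : Disjoint v.1 (w.getVert (2 * s)).1 := alast.2.symm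
    rw [Walk.getVert_zero] at hfin
    rw [Finset.disjoint_iff_inter_eq_empty.mp hdisj] at hfin
    simp at hfin
    omega
  · -- construction of the odd cycle
    have hb : M * t + k ≤ n := by omega
    set fE : ℕ → {A : Finset (Fin n) // A.card = k} :=
      fun j => ⟨kSetE n k t M hb j, kSetE_card n k t M hb j⟩ with hfE
    set fO : ℕ → {A : Finset (Fin n) // A.card = k} :=
      fun j => ⟨kSetO n k t M hb j, kSetO_card n k t M hb hM1 ht hn2 j⟩ with hfO
    set f : ℕ → {A : Finset (Fin n) // A.card = k} :=
      fun i => if i % 2 = 0 then fE (i / 2) else fO (i / 2) with hf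
    set N : ℕ := 2 * M + 1 with hN
    -- auxiliary: multiplication monotonicity facts
    have hmul_lt : ∀ a b : ℕ, a < b → a * t < b * t := by
      intro a b hab
      calc a * t < a * t + t := by omega
        _ = (a + 1) * t := by ring
        _ ≤ b * t := Nat.mul_le_mul_right t (by omega)
    have hmul_le : ∀ a b : ℕ, a ≤ b → a * t ≤ b * t := fun a b h => Nat.mul_le_mul_right t h
    -- distinctness of the sets
    have hEE : ∀ a b, a < b → b ≤ M → fE a ≠ fE b := by
      intro a b hab hbM heq
      have hx : (a * t) < n := by have := hmul_le a M (by omega); omega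
      have hmem := (Subtype.ext_iff.mp heq)
      have h1 : (⟨a * t, hx⟩ : Fin n) ∈ kSetE n k t M hb a := by
        rw [kSetE_mem n k t M hb (by omega)]
        simp
        omega
      have h2 : (⟨a * t, hx⟩ : Fin n) ∉ kSetE n k t M hb b := by
        rw [kSetE_mem n k t M hb hbM]
        simp
        intro hle
        have := hmul_lt a b hab
        omega
      rw [hfE] at heq
      simp only [Subtype.mk.injEq] at heq
      rw [heq] at h1
      exact h2 h1
    have hOO : ∀ a b, a < b → b ≤ M - 1 → fO a ≠ fO b := by
      intro a b hab hbM heq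
      have hx : (a * t) < n := by have := hmul_le a M (by omega); omega
      have h1 : (⟨a * t, hx⟩ : Fin n) ∈ kSetO n k t M hb b := by
        rw [kSetO_mem n k t M hb hbM]
        simp
        left
        exact hmul_lt a b hab
      have h2 : (⟨a * t, hx⟩ : Fin n) ∉ kSetO n k t M hb a := by
        rw [kSetO_mem n k t M hb (by omega)]
        simp
        omega
      rw [hfO] at heq
      simp only [Subtype.mk.injEq] at heq
      rw [heq] at h2
      exact h2 h1
    have hEO : ∀ a b, a ≤ M → b ≤ M - 1 → fE a ≠ fO b := by
      intro a b haM hbM heq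
      have hx : n - 1 < n := by omega
      have h1 : (⟨n - 1, hx⟩ : Fin n) ∈ kSetO n k t M hb b := by
        rw [kSetO_mem n k t M hb hbM]
        simp
        right
        have h2 : (b + 1) * t ≤ M * t := hmul_le (b + 1) M (by omega)
        have h3 : b * t + t = (b + 1) * t := by ring
        omega
      have h2 : (⟨n - 1, hx⟩ : Fin n) ∉ kSetE n k t M hb a := by
        rw [kSetE_mem n k t M hb haM]
        simp
        intro hle
        have := hmul_le a M haM
        omega
      rw [hfE, hfO] at heq
      simp only [Subtype.mk.injEq] at heq
      rw [heq] at h2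
      exact h2 h1
    -- adjacency along the cycle
    have hadj : ∀ i, i + 1 < N → (kneserGraph n k).Adj (f i) (f (i + 1)) := by
      intro i hiN
      rcases Nat.even_or_odd i with ⟨j, hj⟩ | ⟨j, hj⟩
      · -- i = 2j even : fE j adjacent fO j
        have hi2 : i % 2 = 0 := by omega
        have hid : i / 2 = j := by omega
        have hi12 : (i + 1) % 2 = 1 := by omega
        have hi1d : (i + 1) / 2 = j := by omega
        have hjM : j ≤ M - 1 := by omega
        rw [hf]
        simp only [hi2, hid, hi12, hi1d]
        norm_num
        apply kneser_adj_of_disjoint hk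
        rw [Finset.disjoint_left]
        intro x hx hx'
        rw [hfE] at hx; rw [hfO] at hx'
        simp only at hx hx'
        rw [kSetE_mem n k t M hb (by omega)] at hx
        rw [kSetO_mem n k t M hb hjM] at hx'
        omega
      · -- i = 2j+1 odd : fO j adjacent fE (j+1)
        have hi2 : i % 2 = 1 := by omega
        have hid : i / 2 = j := by omega
        have hi12 : (i + 1) % 2 = 0 := by omega
        have hi1d : (i + 1) / 2 = j + 1 := by omega
        have hjM : j ≤ M - 1 := by omega
        rw [hf]
        simp only [hi2, hid, hi12, hi1d]
        norm_num
        apply kneser_adj_of_disjoint hk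
        rw [Finset.disjoint_left]
        intro x hx hx'
        rw [hfO] at hx; rw [hfE] at hx'
        simp only at hx hx'
        rw [kSetO_mem n k t M hb hjM] at hx
        rw [kSetE_mem n k t M hb (by omega)] at hx'
        have e1 : (j + 1) * t = j * t + t := by ring
        omega
    have hlast : (kneserGraph n k).Adj (f (N - 1)) (f 0) := by
      have h1 : (N - 1) % 2 = 0 := by omega
      have h2 : (N - 1) / 2 = M := by omega
      rw [hf]
      simp only [h1, h2]
      norm_num
      apply kneser_adj_of_disjoint hk
      rw [Finset.disjoint_left]
      intro x hx hx'
      rw [hfE] at hx hx'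
      simp only at hx hx'
      rw [kSetE_mem n k t M hb le_rfl] at hx
      rw [kSetE_mem n k t M hb (Nat.zero_le M)] at hx'
      simp at hx'
      omega
    have hinj : ∀ i < N, ∀ j < N, f i = f j → i = j := by
      have key : ∀ i < N, ∀ j < N, i < j → f i ≠ f j := by
        intro i hiN j hjN hij
        rcases Nat.even_or_odd i with ⟨a, ha⟩ | ⟨a, ha⟩ <;>
          rcases Nat.even_or_odd j with ⟨b, hb'⟩ | ⟨b, hb'⟩
        · -- both even
          have e1 : i % 2 = 0 := by omega
          have e2 : i / 2 = a := by omega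
          have e3 : j % 2 = 0 := by omega
          have e4 : j / 2 = b := by omega
          rw [hf]; simp only [e1, e2, e3, e4]; norm_num
          exact hEE a b (by omega) (by omega)
        · -- i even, j odd
          have e1 : i % 2 = 0 := by omega
          have e2 : i / 2 = a := by omega
          have e3 : j % 2 = 1 := by omega
          have e4 : j / 2 = b := by omega
          rw [hf]; simp only [e1, e2, e3, e4]; norm_num
          exact hEO a b (by omega) (by omega)
        · -- i odd, j even
          have e1 : i % 2 = 1 := by omega
          have e2 : i / 2 = a := by omega
          have e3 : j % 2 = 0 := by omega
          have e4 : j / 2 = b := by omega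
          rw [hf]; simp only [e1, e2, e3, e4]; norm_num
          exact fun h => hEO b a (by omega) (by omega) h.symm
        · -- both odd
          have e1 : i % 2 = 1 := by omega
          have e2 : i / 2 = a := by omega
          have e3 : j % 2 = 1 := by omega
          have e4 : j / 2 = b := by omega
          rw [hf]; simp only [e1, e2, e3, e4]; norm_num
          exact hOO a b (by omega) (by omega)
      intro i hiN j hjN heq
      rcases lt_trichotomy i j with h | h | h
      · exact absurd heq (key i hiN j hjN h)
      · exact h
      · exact absurd heq.symm (key j hjN i hiN h)
    obtain ⟨w, hcyc, hlen⟩ :=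
      exists_cycle_of_seq (kneserGraph n k) f N (by omega) hadj hlast hinj
    exact ⟨f 0, w, hcyc, ⟨M, by omega⟩, by omega⟩
end

section
/- Let $n, k$ be positive integers with $n \geq 2k+1$, and let $A, B$ be two $k$-element subsets of $\{1, \ldots, n\}$ with $|A \cap B| = c$. Then in the Kneser graph $KG(n,k)$ there is a walk from $A$ to $B$ of length exactly $2\lceil (k-c)/(n-2k) \rceil$. -/
lemma ceil_step (q d : ℕ) (hq : 0 < q) (hd : 0 < d) :
    ⌈(q : ℚ) / d⌉ = ⌈((q - min d q : ℕ) : ℚ) / d⌉ + 1 := by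
  rcases le_or_gt q d with h | h
  · have : min d q = q := min_eq_right h
    rw [this, Nat.sub_self]
    simp only [Nat.cast_zero, zero_div, Int.ceil_zero, zero_add]
    rw [Int.ceil_eq_iff]
    constructor
    · have : (0:ℚ) < (q:ℚ)/d := by positivity
      push_cast; linarith
    · push_cast
      rw [div_le_one (by positivity)]
      exact_mod_cast h
  · have hmin : min d q = d := min_eq_left h.le
    rw [hmin]
    have hcast : (q : ℚ) = ((q - d : ℕ) : ℚ) + d := by
      push_cast [Nat.cast_sub h.le]; ring
    rw [hcast, add_div, div_self (by positivity), Int.ceil_add_one]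


lemma kneser_aux (n k : ℕ) (hk : 0 < k) (hn : 2 * k + 1 ≤ n) :
    ∀ m : ℕ, ∀ A B : Finset (Fin n), ∀ (hA : A.card = k) (hB : B.card = k),
    k - (A ∩ B).card = m →
    ∃ w : (kneserGraph n k).Walk ⟨A, hA⟩ ⟨B, hB⟩,
      w.length = 2 * (⌈((k : ℚ) - ((A ∩ B).card : ℚ)) / ((n : ℚ) - 2 * k)⌉).toNat := by
  intro m
  induction m using Nat.strong_induction_on with
  | _ m ih =>
  intro A B hA hB hm
  have hcle : (A ∩ B).card ≤ k := hA ▸ Finset.card_le_card (Finset.inter_subset_left)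
  by_cases hAB : A = B
  · subst hAB
    have hck : (A ∩ A).card = k := by rw [Finset.inter_self]; exact hA
    refine ⟨SimpleGraph.Walk.nil, ?_⟩
    rw [hck]
    simp
  · -- A ≠ B, so c < k
    set c := (A ∩ B).card with hc
    have hclt : c < k := by
      rcases lt_or_eq_of_le hcle with h | h
      · exact h
      · exfalso
        have h1 : A ∩ B = A := Finset.eq_of_subset_of_card_le Finset.inter_subset_left (by omega)
        have h2 : A ∩ B = B := Finset.eq_of_subset_of_card_le Finset.inter_subset_right (by omega)
        exact hAB (h1.symm.trans h2)
    set d := n - 2 * k with hd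
    have hd1 : 1 ≤ d := by omega
    set t := min d (k - c) with ht
    have ht1 : 1 ≤ t := by omega
    have htkc : t ≤ k - c := min_le_right _ _
    -- pick T ⊆ B \ A of card t
    have hBA : (B \ A).card = k - c := by
      have := Finset.card_sdiff_add_card_inter B A
      rw [Finset.inter_comm] at this; omega
    have hAB' : (A \ B).card = k - c := by
      have := Finset.card_sdiff_add_card_inter A B
      omega
    obtain ⟨T, hTsub, hTcard⟩ := Finset.exists_subset_card_eq (s := B \ A) (n := t) (by omega)
    obtain ⟨S, hSsub, hScard⟩ := Finset.exists_subset_card_eq (s := A \ B) (n := k - c - t) (by omega)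
    set A' := (A ∩ B) ∪ T ∪ S with hA'def
    have hdisjTI : Disjoint (A ∩ B) T := by
      refine Finset.disjoint_left.mpr fun x hx hxT => ?_
      exact (Finset.mem_sdiff.mp (hTsub hxT)).2 (Finset.mem_inter.mp hx).1
    have hdisjS : Disjoint ((A ∩ B) ∪ T) S := by
      refine Finset.disjoint_left.mpr fun x hx hxS => ?_
      have hxAB := Finset.mem_sdiff.mp (hSsub hxS)
      rcases Finset.mem_union.mp hx with h | h
      · exact hxAB.2 (Finset.mem_inter.mp h).2
      · exact hxAB.2 (Finset.mem_sdiff.mp (hTsub h)).1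
    have hA'card : A'.card = k := by
      rw [hA'def, Finset.card_union_of_disjoint hdisjS,
        Finset.card_union_of_disjoint hdisjTI, hTcard, hScard]
      omega
    have hA'B : (A' ∩ B).card = c + t := by
      have : A' ∩ B = (A ∩ B) ∪ T := by
        ext x
        simp only [hA'def, Finset.mem_inter, Finset.mem_union]
        constructor
        · rintro ⟨(h | h) | h, hxB⟩
          · exact Or.inl ⟨h.1, hxB⟩
          · exact Or.inr h
          · exact absurd hxB (Finset.mem_sdiff.mp (hSsub h)).2
        · rintro (h | h)
          · exact ⟨Or.inl (Or.inl h), h.2⟩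
          · exact ⟨Or.inl (Or.inr h), (Finset.mem_sdiff.mp (hTsub h)).1⟩
      rw [this, Finset.card_union_of_disjoint hdisjTI, hTcard, hc]
    -- the union A ∪ A' is small
    have hUnion : A ∪ A' = A ∪ T := by
      ext x
      simp only [hA'def, Finset.mem_union]
      constructor
      · rintro (h | (h | h) | h)
        · exact Or.inl h
        · exact Or.inl (Finset.mem_inter.mp h).1
        · exact Or.inr h
        · exact Or.inl (Finset.mem_sdiff.mp (hSsub h)).1
      · rintro (h | h)
        · exact Or.inl h
        · exact Or.inr (Or.inl (Or.inr h))
    have hdisjAT : Disjoint A T := by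
      refine Finset.disjoint_left.mpr fun x hx hxT => ?_
      exact (Finset.mem_sdiff.mp (hTsub hxT)).2 hx
    have hUcard : (A ∪ A').card = k + t := by
      rw [hUnion, Finset.card_union_of_disjoint hdisjAT, hA, hTcard]
    -- pick C in the complement
    have hcompl : k ≤ (A ∪ A')ᶜ.card := by
      rw [Finset.card_compl, Fintype.card_fin, hUcard]
      omega
    obtain ⟨C, hCsub, hCcard⟩ := Finset.exists_subset_card_eq (s := (A ∪ A')ᶜ) (n := k) hcompl
    have hCne : C.Nonempty := Finset.card_pos.mp (by omega)
    have hCdisjA : Disjoint C A := by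
      refine Finset.disjoint_left.mpr fun x hx hxA => ?_
      exact (Finset.mem_compl.mp (hCsub hx)) (Finset.mem_union_left _ hxA)
    have hCdisjA' : Disjoint C A' := by
      refine Finset.disjoint_left.mpr fun x hx hxA => ?_
      exact (Finset.mem_compl.mp (hCsub hx)) (Finset.mem_union_right _ hxA)
    have hadj1 : (kneserGraph n k).Adj ⟨A, hA⟩ ⟨C, hCcard⟩ := by
      refine ⟨fun h => ?_, hCdisjA.symm⟩
      obtain ⟨x, hx⟩ := hCne
      have : x ∈ A := by rw [Subtype.mk.injEq] at h; rw [h]; exact hx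
      exact Finset.disjoint_left.mp hCdisjA hx this
    have hadj2 : (kneserGraph n k).Adj ⟨C, hCcard⟩ ⟨A', hA'card⟩ := by
      refine ⟨fun h => ?_, hCdisjA'⟩
      obtain ⟨x, hx⟩ := hCne
      have : x ∈ A' := by rw [Subtype.mk.injEq] at h; rw [← h]; exact hx
      exact Finset.disjoint_left.mp hCdisjA' hx this
    -- induction
    obtain ⟨w', hw'⟩ := ih (k - (A' ∩ B).card) (by omega) A' B hA'card hB rfl
    refine ⟨SimpleGraph.Walk.cons hadj1 (SimpleGraph.Walk.cons hadj2 w'), ?_⟩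
    simp only [SimpleGraph.Walk.length_cons, hw']
    -- arithmetic
    have hdcast : ((n : ℚ) - 2 * k) = ((d : ℕ) : ℚ) := by
      push_cast [hd, Nat.cast_sub (by omega : 2 * k ≤ n)]; ring
    have hkc : ((k : ℚ) - ((A ∩ B).card : ℚ)) = (((k - c : ℕ)) : ℚ) := by
      rw [← hc, Nat.cast_sub hcle]
    have hkc' : ((k : ℚ) - ((A' ∩ B).card : ℚ)) = (((k - c - t : ℕ)) : ℚ) := by
      rw [hA'B]
      push_cast [Nat.cast_sub (by omega : t ≤ k - c), Nat.cast_sub hcle]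
      ring
    rw [hkc, hkc', hdcast]
    have hstep := ceil_step (k - c) d (by omega) (by omega)
    rw [← ht] at hstep
    rw [hstep]
    have h0 : (0:ℤ) ≤ ⌈(((k - c - t : ℕ)) : ℚ) / ((d:ℕ) : ℚ)⌉ := by
      apply Int.ceil_nonneg
      positivity
    omega


/-- In `KG(n,k)` with `n ≥ 2k+1`, between any two vertices `A, B` with
`|A ∩ B| = c` there is a walk of (even) length `2⌈(k-c)/(n-2k)⌉`. -/
theorem kneser_even_path (n k c : ℕ) (hk : 0 < k) (hn : 2 * k + 1 ≤ n)
    (A B : Finset (Fin n)) (hA : A.card = k) (hB : B.card = k)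
    (hc : (A ∩ B).card = c) :
    ∃ w : (kneserGraph n k).Walk ⟨A, hA⟩ ⟨B, hB⟩,
      w.length = 2 * (⌈((k : ℚ) - (c : ℚ)) / ((n : ℚ) - 2 * k)⌉).toNat := by
  subst hc
  exact kneser_aux n k hk hn (k - (A ∩ B).card) A B hA hB rfl
end

section
/- Let $n, k$ be positive integers with $n \geq 2k+1$. The diameter of the bipartite Kneser graph $B(n,k)$ equals $2\lceil k/(n-2k) \rceil + 1$; that is, any two vertices of $B(n,k)$ are at distance at most $2\lceil k/(n-2k) \rceil + 1$, and there exist two vertices at distance exactly $2\lceil k/(n-2k) \rceil + 1$ (for instance the two vertices $(A,0)$ and $(A,1)$ for any $k$-subset $A$). -/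
/-- The bipartite Kneser graph `B(n,k)` (the incidence graph of the
neighborhood geometry of the Kneser graph `KG(n,k)`): vertices are pairs
`(A, ε)` with `A` a `k`-subset of `{1, …, n}` and `ε ∈ {0,1}` (a `Bool`), with
`(A, 0)` adjacent to `(B, 1)` iff `A` and `B` are disjoint. -/
def bipartiteKneser (n k : ℕ) :
    SimpleGraph ({A : Finset (Fin n) // A.card = k} × Bool) where
  Adj X Y := X.2 ≠ Y.2 ∧ Disjoint X.1.1 Y.1.1
  symm := ⟨fun _ _ h => ⟨h.1.symm, h.2.symm⟩⟩
  loopless := ⟨fun _ h => h.1 rfl⟩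

open SimpleGraph Finset

lemma bk_adj {n k : ℕ} {X Y : {A : Finset (Fin n) // A.card = k} × Bool} :
    (bipartiteKneser n k).Adj X Y ↔ X.2 ≠ Y.2 ∧ Disjoint X.1.1 Y.1.1 := Iff.rfl

/-- Each edge of the bipartite Kneser graph flips the boolean coordinate, so the
parity of a walk's length is determined by the endpoints. -/
lemma bk_parity {n k : ℕ} {u v : {A : Finset (Fin n) // A.card = k} × Bool}
    (w : (bipartiteKneser n k).Walk u v) : (u.2 = v.2) ↔ Even w.length := by
  induction w with
  | nil => simp
  | @cons a b c h p ih =>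
    have hab : a.2 ≠ b.2 := (bk_adj.1 h).1
    rw [SimpleGraph.Walk.length_cons, Nat.even_add_one, ← ih]
    cases hb : a.2 <;> cases hb' : b.2 <;> cases hbv : c.2 <;> simp_all

lemma bk_inter_le {n k : ℕ} {A X Y : Finset (Fin n)} (hA : A.card = k)
    (hXY : Disjoint X Y) : (A ∩ X).card + (A ∩ Y).card ≤ k := by
  rw [← Finset.card_union_of_disjoint (hXY.mono inter_subset_right inter_subset_right)]
  exact hA ▸ Finset.card_le_card (Finset.union_subset inter_subset_left inter_subset_left)

lemma bk_inter_ge {n k : ℕ} {A X Y : Finset (Fin n)} (hA : A.card = k)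
    (hX : X.card = k) (hY : Y.card = k) (hXY : Disjoint X Y) :
    k ≤ (A ∩ X).card + (A ∩ Y).card + (n - 2 * k) := by
  have hsub : A ⊆ (A ∩ X) ∪ (A ∩ Y) ∪ (X ∪ Y)ᶜ := by
    intro a ha
    simp only [Finset.mem_union, Finset.mem_inter, Finset.mem_compl]
    by_cases hx : a ∈ X
    · exact Or.inl (Or.inl ⟨ha, hx⟩)
    by_cases hy : a ∈ Y
    · exact Or.inl (Or.inr ⟨ha, hy⟩)
    · exact Or.inr (by simp [hx, hy])
  have hcompl : ((X ∪ Y)ᶜ : Finset (Fin n)).card = n - 2 * k := by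
    rw [Finset.card_compl, Finset.card_union_of_disjoint hXY, hX, hY, Fintype.card_fin]
    ring_nf
  calc k = A.card := hA.symm
    _ ≤ ((A ∩ X) ∪ (A ∩ Y) ∪ (X ∪ Y)ᶜ).card := Finset.card_le_card hsub
    _ ≤ (A ∩ X).card + (A ∩ Y).card + (n - 2 * k) := by
        refine le_trans (Finset.card_union_le _ _) ?_
        rw [hcompl]
        exact Nat.add_le_add_right (Finset.card_union_le _ _) _

/-- The key invariant along any walk in the bipartite Kneser graph, measured
against a fixed `k`-set `A`. -/
lemma bk_invariant {n k : ℕ} {A : Finset (Fin n)} (hA : A.card = k)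
    {v u : {A : Finset (Fin n) // A.card = k} × Bool}
    (w : (bipartiteKneser n k).Walk v u) :
    (v.2 = u.2 → 2 * (A ∩ u.1.1).card ≤ w.length * (n - 2 * k) + 2 * (A ∩ v.1.1).card) ∧
    (v.2 ≠ u.2 → 2 * ((A ∩ u.1.1).card + (A ∩ v.1.1).card) + (n - 2 * k)
        ≤ w.length * (n - 2 * k) + 2 * k) := by
  induction w with
  | nil => simp
  | @cons a b c h p ih =>
    have hab : a.2 ≠ b.2 := (bk_adj.1 h).1
    have hle := bk_inter_le hA (bk_adj.1 h).2
    have hge := bk_inter_ge (A := A) hA a.1.2 b.1.2 (bk_adj.1 h).2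
    rw [SimpleGraph.Walk.length_cons, add_mul, one_mul]
    constructor
    · intro ht
      have hb : b.2 ≠ c.2 := by cases h1 : a.2 <;> cases h2 : b.2 <;> simp_all
      have := ih.2 hb
      omega
    · intro hf
      have hb : b.2 = c.2 := by cases h1 : a.2 <;> cases h2 : b.2 <;> cases h3 : c.2 <;> simp_all
      have := ih.1 hb
      omega

/-- If two `k`-sets jointly avoid at least `k` points, they have a common
neighbour, i.e. are joined by a walk of length 2 on the same side. -/
lemma bk_double_step {n k : ℕ} (hn : 2 * k + 1 ≤ n)
    (X X' : {A : Finset (Fin n) // A.card = k}) (ε : Bool)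
    (hU : (X.1 ∪ X'.1).card ≤ n - k) :
    ∃ w : (bipartiteKneser n k).Walk (X, ε) (X', ε), w.length = 2 := by
  have hcompl : k ≤ ((X.1 ∪ X'.1)ᶜ : Finset (Fin n)).card := by
    rw [Finset.card_compl, Fintype.card_fin]
    omega
  obtain ⟨Y, hYsub, hYcard⟩ := Finset.exists_subset_card_eq hcompl
  have hYX : Disjoint X.1 Y := by
    rw [Finset.disjoint_left]
    intro a ha haY
    have := hYsub haY
    simp only [Finset.mem_compl, Finset.mem_union] at this
    exact this (Or.inl ha)
  have hYX' : Disjoint Y X'.1 := by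
    rw [Finset.disjoint_right]
    intro a ha haY
    have := hYsub haY
    simp only [Finset.mem_compl, Finset.mem_union] at this
    exact this (Or.inr ha)
  exact ⟨SimpleGraph.Walk.cons (v := (⟨Y, hYcard⟩, !ε)) (bk_adj.2 ⟨by simp, hYX⟩)
    (SimpleGraph.Walk.cons (bk_adj.2 ⟨by simp, hYX'⟩) SimpleGraph.Walk.nil), by simp⟩

/-- Chain lemma: two `k`-sets differing in at most `m * (n - 2k)` elements are
joined (on the same side) by a walk of length at most `2 * m`. -/
lemma bk_chain {n k : ℕ} (hn : 2 * k + 1 ≤ n) :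
    ∀ (m : ℕ) (X B : {A : Finset (Fin n) // A.card = k}) (ε : Bool),
    (X.1 \ B.1).card ≤ m * (n - 2 * k) →
    ∃ w : (bipartiteKneser n k).Walk (X, ε) (B, ε), w.length ≤ 2 * m := by
  intro m
  induction m with
  | zero =>
    intro X B ε hle
    simp only [Nat.zero_mul, Nat.le_zero, Finset.card_eq_zero,
      Finset.sdiff_eq_empty_iff_subset] at hle
    have : X = B := Subtype.ext (Finset.eq_of_subset_of_card_le hle (by rw [X.2, B.2]))
    subst this
    exact ⟨SimpleGraph.Walk.nil, by simp⟩
  | succ m ih =>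
    intro X B ε hle
    set d := n - 2 * k with hd
    rw [Nat.succ_mul] at hle
    have hd1 : 1 ≤ d := by omega
    have hmin : min d (X.1 \ B.1).card ≤ (X.1 \ B.1).card := min_le_right _ _
    obtain ⟨S, hSsub, hScard⟩ := Finset.exists_subset_card_eq hmin
    have hBX : (B.1 \ X.1).card = (X.1 \ B.1).card :=
      Finset.card_sdiff_comm (by rw [X.2, B.2])
    obtain ⟨T, hTsub, hTcard⟩ := Finset.exists_subset_card_eq (hBX ▸ hmin)
    have hSX : S ⊆ X.1 := hSsub.trans Finset.sdiff_subset
    have hTX : Disjoint T X.1 := Finset.sdiff_disjoint.mono_left hTsub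
    have hTB : T ⊆ B.1 := hTsub.trans Finset.sdiff_subset
    have hX'card : ((X.1 \ S) ∪ T).card = k := by
      rw [Finset.card_union_of_disjoint (hTX.mono_right Finset.sdiff_subset).symm,
        Finset.card_sdiff_of_subset hSX, X.2, hTcard, hScard]
      have : min d (X.1 \ B.1).card ≤ k := by
        refine le_trans hmin (le_trans (Finset.card_le_card Finset.sdiff_subset) ?_)
        rw [X.2]
      omega
    set X' : {A : Finset (Fin n) // A.card = k} := ⟨(X.1 \ S) ∪ T, hX'card⟩ with hX'
    have hUcard : (X.1 ∪ X'.1).card ≤ n - k := by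
      have hUeq : X.1 ∪ X'.1 = X.1 ∪ T := by
        simp only [hX']
        rw [← Finset.union_assoc, Finset.union_eq_left.2 Finset.sdiff_subset]
      rw [hUeq, Finset.card_union_of_disjoint hTX.symm, X.2, hTcard]
      have : min d (X.1 \ B.1).card ≤ d := min_le_left _ _
      omega
    obtain ⟨w1, hw1⟩ := bk_double_step hn X X' ε hUcard
    have hX'B : (X'.1 \ B.1).card ≤ m * d := by
      have heq : X'.1 \ B.1 = (X.1 \ B.1) \ S := by
        simp only [hX']
        ext a
        simp only [Finset.mem_union, Finset.mem_sdiff]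
        constructor
        · rintro ⟨hx | ht, hb⟩
          · exact ⟨⟨hx.1, hb⟩, hx.2⟩
          · exact absurd (hTB ht) hb
        · rintro ⟨⟨hx, hb⟩, hs⟩
          exact ⟨Or.inl ⟨hx, hs⟩, hb⟩
      rw [heq, Finset.card_sdiff_of_subset hSsub, hScard]
      rcases le_or_gt d (X.1 \ B.1).card with hcase | hcase
      · rw [min_eq_left hcase]; omega
      · rw [min_eq_right hcase.le]; omega
    obtain ⟨w2, hw2⟩ := ih X' B ε hX'B
    exact ⟨w1.append w2, by rw [SimpleGraph.Walk.length_append, hw1]; omega⟩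

lemma bk_ceil_facts {n k : ℕ} (hk : 0 < k) (hn : 2 * k + 1 ≤ n) :
    k ≤ (⌈(k : ℚ) / ((n : ℚ) - 2 * k)⌉).toNat * (n - 2 * k) ∧
    1 ≤ (⌈(k : ℚ) / ((n : ℚ) - 2 * k)⌉).toNat ∧
    ((⌈(k : ℚ) / ((n : ℚ) - 2 * k)⌉).toNat - 1) * (n - 2 * k) < k := by
  set d := n - 2 * k with hd
  have hd1 : 1 ≤ d := by omega
  have hcast : (n : ℚ) - 2 * (k : ℚ) = (d : ℚ) := by
    rw [hd, Nat.cast_sub (by omega)]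
    push_cast
    ring
  rw [hcast]
  have hdpos : (0 : ℚ) < (d : ℚ) := by exact_mod_cast hd1
  have hq : (0 : ℚ) < (k : ℚ) / d := by positivity
  have hceil1 : 1 ≤ ⌈(k : ℚ) / d⌉ := Int.one_le_ceil_iff.mpr hq
  set t := (⌈(k : ℚ) / (d : ℚ)⌉).toNat with ht
  have htcast : (t : ℤ) = ⌈(k : ℚ) / (d : ℚ)⌉ := Int.toNat_of_nonneg (by omega)
  have ht1 : 1 ≤ t := by omega
  refine ⟨?_, ht1, ?_⟩
  · have h1 : (k : ℚ) / d ≤ (t : ℚ) := by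
      rw [show ((t : ℚ)) = ((t : ℤ) : ℚ) by push_cast; ring, htcast]
      exact Int.le_ceil _
    have h2 : (k : ℚ) ≤ (t : ℚ) * d := by
      rwa [div_le_iff₀ hdpos] at h1
    exact_mod_cast h2
  · have h1 : ((t : ℚ)) - 1 < (k : ℚ) / d := by
      have := Int.ceil_lt_add_one ((k : ℚ) / d)
      rw [← htcast] at this
      push_cast at this ⊢
      linarith
    have h2 : ((t : ℚ) - 1) * d < (k : ℚ) := by
      rwa [← lt_div_iff₀ hdpos]
    have h3 : (((t - 1 : ℕ)) : ℚ) * d < (k : ℚ) := by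
      rw [Nat.cast_sub ht1]
      push_cast
      linarith [h2]
    exact_mod_cast h3

/-- For `n ≥ 2k+1`, the diameter of `B(n,k)` equals `2⌈k/(n-2k)⌉ + 1`: any two
vertices are at distance at most `2⌈k/(n-2k)⌉ + 1` (there is a walk of at most
that length joining them), and the two vertices `(A,0)` and `(A,1)` are at
distance exactly `2⌈k/(n-2k)⌉ + 1` for every `k`-subset `A`. -/
theorem bipartiteKneser_diameter (n k : ℕ) (hk : 0 < k) (hn : 2 * k + 1 ≤ n) :
    (∀ u v : {A : Finset (Fin n) // A.card = k} × Bool,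
      ∃ w : (bipartiteKneser n k).Walk u v,
        w.length ≤ 2 * (⌈(k : ℚ) / ((n : ℚ) - 2 * k)⌉).toNat + 1) ∧
    (∀ A : {A : Finset (Fin n) // A.card = k},
      (bipartiteKneser n k).dist (A, false) (A, true) =
        2 * (⌈(k : ℚ) / ((n : ℚ) - 2 * k)⌉).toNat + 1) := by
  obtain ⟨hkt, ht1, htk⟩ := bk_ceil_facts hk hn
  set t := (⌈(k : ℚ) / ((n : ℚ) - 2 * k)⌉).toNat with ht
  set d := n - 2 * k with hd
  have hd1 : 1 ≤ d := by omega
  -- the upper bound, as a standalone fact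
  have upper : ∀ u v : {A : Finset (Fin n) // A.card = k} × Bool,
      ∃ w : (bipartiteKneser n k).Walk u v, w.length ≤ 2 * t + 1 := by
    rintro ⟨uA, ub⟩ ⟨vA, vb⟩
    by_cases hb : ub = vb
    · subst hb
      have hle : (uA.1 \ vA.1).card ≤ t * d :=
        le_trans (le_trans (Finset.card_le_card Finset.sdiff_subset) (le_of_eq uA.2)) hkt
      obtain ⟨w, hw⟩ := bk_chain hn t uA vA ub hle
      exact ⟨w, by omega⟩
    · -- pick C disjoint from vA
      have hcompl : k ≤ ((vA.1)ᶜ : Finset (Fin n)).card := by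
        rw [Finset.card_compl, Fintype.card_fin, vA.2]
        omega
      obtain ⟨C, hCsub, hCcard⟩ := Finset.exists_subset_card_eq hcompl
      have hCvA : Disjoint C vA.1 := by
        rw [Finset.disjoint_left]
        intro a ha hav
        exact (Finset.mem_compl.1 (hCsub ha)) hav
      have hle : (uA.1 \ C).card ≤ t * d :=
        le_trans (le_trans (Finset.card_le_card Finset.sdiff_subset) (le_of_eq uA.2)) hkt
      obtain ⟨w, hw⟩ := bk_chain hn t uA ⟨C, hCcard⟩ ub hle
      refine ⟨w.concat (bk_adj.2 ⟨hb, hCvA⟩), ?_⟩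
      rw [SimpleGraph.Walk.length_concat]
      omega
  refine ⟨upper, fun A => ?_⟩
  obtain ⟨w0, hw0⟩ := upper (A, false) (A, true)
  have hdistle : (bipartiteKneser n k).dist (A, false) (A, true) ≤ 2 * t + 1 :=
    le_trans (SimpleGraph.dist_le w0) hw0
  have hreach : (bipartiteKneser n k).Reachable (A, false) (A, true) := ⟨w0⟩
  obtain ⟨p, hp⟩ := hreach.exists_walk_length_eq_dist
  -- parity: the length of p is odd
  have hpar : ¬ Even p.length := by
    rw [← bk_parity p]
    simp
  obtain ⟨m, hm⟩ := Nat.not_even_iff_odd.mp hpar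
  -- the invariant gives 2k + d ≤ p.length * d
  have hinv := (bk_invariant A.2 p).2 (by simp)
  simp only [Finset.inter_self, A.2] at hinv
  rw [hm] at hinv
  have hexp : (2 * m + 1) * d = 2 * (m * d) + d := by ring
  rw [hexp] at hinv
  have hkmd : k ≤ m * d := by omega
  have htm : t ≤ m := by
    by_contra hcon
    push_neg at hcon
    have : m ≤ t - 1 := by omega
    have : m * d ≤ (t - 1) * d := Nat.mul_le_mul_right d this
    omega
  omega
end

section
/- Let $n, k$ be positive integers with $n \geq 2k+1$. The bipartite Kneser graph $B(n,k)$ is a connected graph. -/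
namespace BKaux

variable {n k : ℕ}

lemma exists_disjoint (hn : 2 * k + 1 ≤ n) (S : Finset (Fin n)) (hS : S.card ≤ k + 1) :
    ∃ C : Finset (Fin n), C.card = k ∧ Disjoint C S := by
  have hcompl : Sᶜ.card = n - S.card := by
    rw [Finset.card_compl, Fintype.card_fin]
  have hle : k ≤ Sᶜ.card := by omega
  obtain ⟨C, hCsub, hC⟩ := Finset.exists_subset_card_eq hle
  refine ⟨C, hC, Finset.disjoint_left.2 fun x hx hxS => ?_⟩
  exact (Finset.mem_compl.1 (hCsub hx)) hxS

lemma step2 (hn : 2 * k + 1 ≤ n) {A A' : {A : Finset (Fin n) // A.card = k}} (ε : Bool)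
    (h : (A.1 ∪ A'.1).card ≤ k + 1) :
    (bipartiteKneser n k).Reachable (A, ε) (A', ε) := by
  obtain ⟨C, hC, hdisj⟩ := exists_disjoint hn _ h
  have h1 : (bipartiteKneser n k).Adj (A, ε) (⟨C, hC⟩, !ε) :=
    ⟨by simp, (hdisj.mono_right Finset.subset_union_left).symm⟩
  have h2 : (bipartiteKneser n k).Adj (⟨C, hC⟩, !ε) (A', ε) :=
    ⟨by simp, hdisj.mono_right Finset.subset_union_right⟩
  exact h1.reachable.trans h2.reachable

lemma reach_same (hk : 0 < k) (hn : 2 * k + 1 ≤ n) (ε : Bool) :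
    ∀ m (A A' : {A : Finset (Fin n) // A.card = k}), (A'.1 \ A.1).card ≤ m →
      (bipartiteKneser n k).Reachable (A, ε) (A', ε) := by
  intro m
  induction m with
  | zero =>
    intro A A' h
    have hsub : A'.1 ⊆ A.1 := by
      have : A'.1 \ A.1 = ∅ := Finset.card_eq_zero.1 (Nat.le_zero.1 h)
      intro x hx
      by_contra hxA
      exact Finset.notMem_empty x (this ▸ Finset.mem_sdiff.2 ⟨hx, hxA⟩)
    have : A' = A := Subtype.ext (Finset.eq_of_subset_of_card_le hsub (by rw [A.2, A'.2]))
    rw [this]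
  | succ m ih =>
    intro A A' h
    by_cases hAA : A'.1 = A.1
    · rw [Subtype.ext hAA]
    · have hne : (A'.1 \ A.1).Nonempty := by
        rw [Finset.sdiff_nonempty]
        intro hsub
        exact hAA (Finset.eq_of_subset_of_card_le hsub (by rw [A.2, A'.2]))
      obtain ⟨b, hb⟩ := hne
      have hne' : (A.1 \ A'.1).Nonempty := by
        rw [Finset.sdiff_nonempty]
        intro hsub
        exact hAA ((Finset.eq_of_subset_of_card_le hsub (by rw [A.2, A'.2])).symm)
      obtain ⟨a, ha⟩ := hne'
      obtain ⟨hbA', hbA⟩ := Finset.mem_sdiff.1 hb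
      obtain ⟨haA, haA'⟩ := Finset.mem_sdiff.1 ha
      have hbnot : b ∉ A.1.erase a := fun hx => hbA (Finset.mem_of_mem_erase hx)
      have hBcard : (insert b (A.1.erase a)).card = k := by
        rw [Finset.card_insert_of_notMem hbnot, Finset.card_erase_of_mem haA, A.2]
        omega
      set B : {A : Finset (Fin n) // A.card = k} := ⟨insert b (A.1.erase a), hBcard⟩ with hBdef
      have hstep : (bipartiteKneser n k).Reachable (A, ε) (B, ε) := by
        apply step2 hn
        have hun : A.1 ∪ B.1 = insert b A.1 := by
          ext x
          simp only [hBdef, Finset.mem_union, Finset.mem_insert, Finset.mem_erase]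
          constructor
          · rintro (hx | hx | ⟨_, hx⟩) <;> tauto
          · rintro (rfl | hx)
            · tauto
            · tauto
        rw [hun, Finset.card_insert_of_notMem hbA, A.2]
      refine hstep.trans (ih B A' ?_)
      have hsub : A'.1 \ B.1 ⊆ (A'.1 \ A.1).erase b := by
        intro x hx
        obtain ⟨hx1, hx2⟩ := Finset.mem_sdiff.1 hx
        simp only [hBdef, Finset.mem_insert, Finset.mem_erase, not_or, not_and] at hx2
        obtain ⟨hxb, hx3⟩ := hx2
        refine Finset.mem_erase.2 ⟨hxb, Finset.mem_sdiff.2 ⟨hx1, fun hxA => ?_⟩⟩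
        exact (hx3 (fun hxa => haA' (hxa ▸ hx1))) hxA
      calc (A'.1 \ B.1).card ≤ ((A'.1 \ A.1).erase b).card := Finset.card_le_card hsub
        _ = (A'.1 \ A.1).card - 1 := Finset.card_erase_of_mem hb
        _ ≤ m := by omega

end BKaux

/-- For `n ≥ 2k+1`, the bipartite Kneser graph `B(n,k)` is connected. -/
theorem bipartiteKneser_connected (n k : ℕ) (hk : 0 < k) (hn : 2 * k + 1 ≤ n) :
    (bipartiteKneser n k).Connected := by
  have hkn : k ≤ n := by omega
  obtain ⟨A0, _, hA0⟩ := Finset.exists_subset_card_eq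
    (by rw [Finset.card_univ, Fintype.card_fin]; exact hkn : k ≤ (Finset.univ : Finset (Fin n)).card)
  have hcross : ∀ (A A' : {A : Finset (Fin n) // A.card = k}) (ε : Bool),
      (bipartiteKneser n k).Reachable (A, ε) (A', !ε) := by
    intro A A' ε
    obtain ⟨C, hC, hdisj⟩ := BKaux.exists_disjoint hn A.1 (by rw [A.2]; omega)
    have h1 : (bipartiteKneser n k).Adj (A, ε) (⟨C, hC⟩, !ε) := ⟨by simp, hdisj.symm⟩
    exact h1.reachable.trans
      (BKaux.reach_same hk hn (!ε) ((A'.1 \ C).card) ⟨C, hC⟩ A' le_rfl)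
  rw [SimpleGraph.connected_iff]
  constructor
  · intro X Y
    obtain ⟨A, ε⟩ := X
    obtain ⟨A', ε'⟩ := Y
    by_cases hεε : ε = ε'
    · subst hεε
      exact BKaux.reach_same hk hn ε ((A'.1 \ A.1).card) A A' le_rfl
    · have : ε' = !ε := by
        cases ε <;> cases ε' <;> simp_all
      rw [this]
      exact hcross A A' ε
  · exact ⟨(⟨A0, hA0⟩, false)⟩
end

section
/- Let $n, k, r$ be positive integers with $n \geq 2k+1$ and $r \geq 2$, and let $\Omega$ be a finite set with $|\Omega| = n + k(r-2)$. The incidence graph of $\Gamma(KG(n,k),r)$ — the simple graph on pairs $(i, A)$, $i \in \{1,\ldots,r\}$, $A$ a $k$-subset of $\Omega$, with $(i,A)$ adjacent to $(j,B)$ iff $i \neq j$ and $A \cap B = \emptyset$ — is connected. -/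
/-- The incidence graph of the incidence system `Γ(KG(n,k),r)`: vertices are
pairs `(i, A)` with `i` a type in `{1, …, r}` and `A` a `k`-subset of `Ω`;
`(i, A)` and `(j, B)` are adjacent iff `i ≠ j` and `A ∩ B = ∅`. -/
def incidenceGraph (r k : ℕ) (Ω : Type*) :
    SimpleGraph (Fin r × {A : Finset Ω // A.card = k}) where
  Adj X Y := X.1 ≠ Y.1 ∧ Disjoint X.2.1 Y.2.1
  symm := ⟨fun _ _ h => ⟨h.1.symm, h.2.symm⟩⟩
  loopless := ⟨fun _ h => h.1 rfl⟩

namespace IncidenceGraphAux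

variable {r k : ℕ} {Ω : Type*} [Fintype Ω] [DecidableEq Ω]

lemma adj_of {i j : Fin r} (hij : i ≠ j) (A B : {A : Finset Ω // A.card = k})
    (h : Disjoint A.1 B.1) : (incidenceGraph r k Ω).Adj (i, A) (j, B) := ⟨hij, h⟩

lemma exists_ne_fin (hr : 2 ≤ r) (i : Fin r) : ∃ j : Fin r, j ≠ i := by
  rcases i with ⟨v, hv⟩
  by_cases h : v = 0
  · exact ⟨⟨1, by omega⟩, by simp [Fin.ext_iff, h]⟩
  · exact ⟨⟨0, by omega⟩, by simp [Fin.ext_iff]; omega⟩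

lemma exists_disjoint (S : Finset Ω) (h : S.card + k ≤ Fintype.card Ω) :
    ∃ C : Finset Ω, C.card = k ∧ Disjoint S C := by
  have hc : k ≤ Sᶜ.card := by
    rw [Finset.card_compl]; omega
  obtain ⟨C, hCs, hC⟩ := Finset.exists_subset_card_eq hc
  exact ⟨C, hC, disjoint_compl_right.mono_right hCs⟩

/-- Even-length connectivity: within the same type, any two `k`-sets are
connected (via a common disjoint neighbor, by induction on `|A \ B|`). -/
lemma even_reach (hm : 2 * k + 1 ≤ Fintype.card Ω) (hr : 2 ≤ r) :
    ∀ d (A B : Finset Ω) (hA : A.card = k) (hB : B.card = k), (A \ B).card ≤ d →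
    ∀ i : Fin r,
      (incidenceGraph r k Ω).Reachable (i, ⟨A, hA⟩) (i, ⟨B, hB⟩) := by
  intro d
  induction d with
  | zero =>
    intro A B hA hB h i
    have hsub : A ⊆ B := by
      rw [← Finset.sdiff_eq_empty_iff_subset]
      exact Finset.card_eq_zero.mp (Nat.le_zero.mp h)
    have hEq : A = B := Finset.eq_of_subset_of_card_le hsub ((hB.trans hA.symm).le)
    have : (⟨A, hA⟩ : {A : Finset Ω // A.card = k}) = ⟨B, hB⟩ := Subtype.ext hEq
    rw [this]
  | succ d ih =>
    intro A B hA hB hcard i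
    by_cases hAB : A = B
    · have : (⟨A, hA⟩ : {A : Finset Ω // A.card = k}) = ⟨B, hB⟩ := Subtype.ext hAB
      rw [this]
    · have hABne : (A \ B).Nonempty := by
        rw [Finset.sdiff_nonempty]
        intro hs
        exact hAB (Finset.eq_of_subset_of_card_le hs ((hB.trans hA.symm).le))
      obtain ⟨a, ha⟩ := hABne
      have haA : a ∈ A := (Finset.mem_sdiff.mp ha).1
      have haB : a ∉ B := (Finset.mem_sdiff.mp ha).2
      have hBAne : (B \ A).Nonempty := by
        rw [Finset.sdiff_nonempty]
        intro hs
        exact hAB (Finset.eq_of_subset_of_card_le hs ((hA.trans hB.symm).le)).symm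
      obtain ⟨b, hb⟩ := hBAne
      have hbB : b ∈ B := (Finset.mem_sdiff.mp hb).1
      have hbA : b ∉ A := (Finset.mem_sdiff.mp hb).2
      set A' : Finset Ω := insert b (A.erase a) with hA'def
      have hbnot : b ∉ A.erase a := fun h => hbA (Finset.mem_of_mem_erase h)
      have hA' : A'.card = k := by
        have hpos : 0 < A.card := Finset.card_pos.mpr ⟨a, haA⟩
        rw [hA'def, Finset.card_insert_of_notMem hbnot,
          Finset.card_erase_of_mem haA, hA]
        omega
      have hsub : A' \ B ⊆ (A \ B).erase a := by
        intro x hx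
        rw [Finset.mem_sdiff] at hx
        obtain ⟨hx1, hx2⟩ := hx
        rw [hA'def, Finset.mem_insert] at hx1
        rcases hx1 with h | h
        · exact absurd (h ▸ hbB) hx2
        · exact Finset.mem_erase.mpr ⟨(Finset.mem_erase.mp h).1,
            Finset.mem_sdiff.mpr ⟨Finset.mem_of_mem_erase h, hx2⟩⟩
      have hcard' : (A' \ B).card ≤ d := by
        have h1 := Finset.card_le_card hsub
        have h2 := Finset.card_erase_of_mem ha
        omega
      have hUnion : A ∪ A' = insert b A := by
        rw [hA'def, Finset.union_insert, Finset.union_eq_left.mpr (Finset.erase_subset a A)]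
      have hUcard : (A ∪ A').card ≤ k + 1 := by
        rw [hUnion]
        have := Finset.card_insert_le b A
        omega
      obtain ⟨C, hC, hdisj⟩ := exists_disjoint (k := k) (A ∪ A') (by omega)
      have hdA : Disjoint A C := hdisj.mono_left Finset.subset_union_left
      have hdA' : Disjoint A' C := hdisj.mono_left Finset.subset_union_right
      obtain ⟨j, hj⟩ := exists_ne_fin hr i
      have step1 : (incidenceGraph r k Ω).Adj (i, ⟨A, hA⟩) (j, ⟨C, hC⟩) :=
        adj_of (Ne.symm hj) _ _ hdA
      have step2 : (incidenceGraph r k Ω).Adj (j, ⟨C, hC⟩) (i, ⟨A', hA'⟩) :=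
        adj_of hj _ _ hdA'.symm
      exact step1.reachable.trans (step2.reachable.trans (ih A' B hA' hB hcard' i))

/-- Odd-length connectivity: one can change the type while keeping the set,
using an odd cycle in the Kneser graph (the odd graph cycle of length `2k+1`). -/
lemma odd_reach (hk : 0 < k) (hm : 2 * k + 1 ≤ Fintype.card Ω) (hr : 2 ≤ r)
    (A : Finset Ω) (hA : A.card = k) (i j : Fin r) (hij : i ≠ j) :
    (incidenceGraph r k Ω).Reachable (i, ⟨A, hA⟩) (j, ⟨A, hA⟩) := by
  set N := 2 * k + 1 with hN
  haveI : NeZero N := ⟨by omega⟩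
  obtain ⟨f⟩ : Nonempty (ZMod N ↪ Ω) :=
    Function.Embedding.nonempty_of_card_le (by rw [ZMod.card]; omega)
  -- the cycle of sets
  set S : ZMod N → Finset Ω :=
    fun t => Finset.image (fun a : Fin k => f (t + 2 * ((a : ℕ) : ZMod N))) Finset.univ
    with hSdef
  have hScard : ∀ t, (S t).card = k := by
    intro t
    rw [hSdef]
    rw [Finset.card_image_of_injective _ ?_, Finset.card_univ, Fintype.card_fin]
    intro a b hab
    have h1 : t + 2 * ((a : ℕ) : ZMod N) = t + 2 * ((b : ℕ) : ZMod N) := f.injective hab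
    have h2 : ((2 * (a : ℕ) : ℕ) : ZMod N) = ((2 * (b : ℕ) : ℕ) : ZMod N) := by
      push_cast
      exact add_left_cancel h1
    have h3 := congrArg ZMod.val h2
    rw [ZMod.val_cast_of_lt (by omega), ZMod.val_cast_of_lt (by omega)] at h3
    exact Fin.ext (by omega)
  have hSdisj : ∀ t : ZMod N, Disjoint (S t) (S (t + 1)) := by
    intro t
    rw [Finset.disjoint_left]
    intro x hx hx'
    rw [hSdef, Finset.mem_image] at hx hx'
    obtain ⟨a, -, ha⟩ := hx
    obtain ⟨b, -, hb⟩ := hx'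
    have h1 : t + 2 * ((a : ℕ) : ZMod N) = t + 1 + 2 * ((b : ℕ) : ZMod N) :=
      f.injective (ha.trans hb.symm)
    have h2 : ((2 * (a : ℕ) : ℕ) : ZMod N) = ((2 * (b : ℕ) + 1 : ℕ) : ZMod N) := by
      push_cast
      rw [add_assoc] at h1
      have := add_left_cancel h1
      rw [this, add_comm 1]
    have h3 := congrArg ZMod.val h2
    rw [ZMod.val_cast_of_lt (by omega), ZMod.val_cast_of_lt (by omega)] at h3
    omega
  -- walk along the cycle
  have key : ∀ l : ℕ, l ≤ N →
      (incidenceGraph r k Ω).Reachable (i, ⟨S 0, hScard 0⟩)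
        ((if Even l then i else j), ⟨S (l : ZMod N), hScard _⟩) := by
    intro l
    induction l with
    | zero =>
      intro _
      simp only [Nat.cast_zero, Even.zero, if_true]
      exact SimpleGraph.Reachable.refl _
    | succ l ih =>
      intro hl
      have hreach := ih (by omega)
      have hstep : (incidenceGraph r k Ω).Adj
          ((if Even l then i else j), ⟨S (l : ZMod N), hScard _⟩)
          ((if Even (l + 1) then i else j), ⟨S ((l + 1 : ℕ) : ZMod N), hScard _⟩) := by
        refine adj_of ?_ _ _ ?_
        · rcases Nat.even_or_odd l with h | h
          · rw [if_pos h, if_neg (by simpa [Nat.even_add_one] using h)]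
            exact hij
          · rw [if_neg (Nat.not_even_iff_odd.mpr h),
              if_pos (Nat.even_add_one.mpr (Nat.not_even_iff_odd.mpr h))]
            exact hij.symm
        · have : ((l + 1 : ℕ) : ZMod N) = (l : ZMod N) + 1 := by push_cast; ring
          rw [this]
          exact hSdisj _
      exact hreach.trans hstep.reachable
  have hfinal := key N (le_refl N)
  have hodd : ¬ Even N := by rw [Nat.even_iff]; omega
  rw [if_neg hodd] at hfinal
  have hzero : ((N : ℕ) : ZMod N) = 0 := ZMod.natCast_self N
  rw [hzero] at hfinal
  -- combine: (i, A) → (i, S 0) → (j, S 0) → (j, A)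
  have h1 := even_reach hm hr ((A \ S 0).card) A (S 0) hA (hScard 0) (le_refl _) i
  have h2 := even_reach hm hr (((S 0) \ A).card) (S 0) A (hScard 0) hA (le_refl _) j
  exact h1.trans (hfinal.trans h2)

end IncidenceGraphAux

/-- The incidence graph of `Γ(KG(n,k),r)` is connected. -/
theorem incidenceGraph_connected (n k r : ℕ) (hk : 0 < k) (hn : 2 * k + 1 ≤ n)
    (hr : 2 ≤ r) (Ω : Type*) [Fintype Ω] [DecidableEq Ω]
    (hΩ : Fintype.card Ω = n + k * (r - 2)) :
    (incidenceGraph r k Ω).Connected := by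
  have hm : 2 * k + 1 ≤ Fintype.card Ω := by
    have : n ≤ n + k * (r - 2) := Nat.le_add_right _ _
    omega
  obtain ⟨A₀, -, hA₀⟩ := Finset.exists_subset_card_eq
    (show k ≤ (Finset.univ : Finset Ω).card by rw [Finset.card_univ]; omega)
  rw [SimpleGraph.connected_iff]
  refine ⟨?_, ⟨(⟨0, by omega⟩, ⟨A₀, hA₀⟩)⟩⟩
  · intro X Y
    obtain ⟨i, A, hA⟩ := X
    obtain ⟨j, B, hB⟩ := Y
    by_cases hij : i = j
    · subst hij
      exact IncidenceGraphAux.even_reach hm hr ((A \ B).card) A B hA hB (le_refl _) i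
    · exact (IncidenceGraphAux.even_reach hm hr ((A \ B).card) A B hA hB (le_refl _) i).trans
        (IncidenceGraphAux.odd_reach hk hm hr B hB i j hij)
end

section
/- Let $n, k, r$ be positive integers with $n \geq 2k+1$ and $r \geq 2$, and let $\Omega$ be a finite set with $|\Omega| = n + k(r-2)$. Let $F = \{(i_1, C_1), \ldots, (i_{r-2}, C_{r-2})\}$ be a flag of $\Gamma(KG(n,k),r)$ of rank $r-2$ (so the $C_m$ are pairwise disjoint $k$-subsets of $\Omega$ and the types $i_m$ are distinct), and let $i, j$ be the two types not occurring in $F$. Then the subgraph of the incidence graph of $\Gamma(KG(n,k),r)$ induced on the vertices $(i, A)$ and $(j, B)$ with $A$ and $B$ disjoint from every $C_m$ is isomorphic to the bipartite Kneser graph $B(n,k)$. (Every rank two residue of $\Gamma(KG(n,k),r)$ is isomorphic to the neighborhood geometry of $KG(n,k)$.) -/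
/-- Every rank two residue of `Γ(KG(n,k),r)` is isomorphic to the neighborhood
geometry of `KG(n,k)`: given a flag `{(t m, C m)}` of rank `r-2` and the two
remaining types `i, j`, the subgraph of the incidence graph induced on the
elements of type `i` or `j` that are disjoint from every `C m` is isomorphic to
the bipartite Kneser graph `B(n,k)`. -/
theorem rank_two_residue_iso (n k r : ℕ) (hk : 0 < k) (hn : 2 * k + 1 ≤ n)
    (hr : 2 ≤ r) (Ω : Type*) [Fintype Ω] [DecidableEq Ω]
    (hΩ : Fintype.card Ω = n + k * (r - 2))
    (t : Fin (r - 2) → Fin r) (ht : Function.Injective t)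
    (C : Fin (r - 2) → Finset Ω) (hC : ∀ m, (C m).card = k)
    (hCd : ∀ m m', m ≠ m' → Disjoint (C m) (C m'))
    (i j : Fin r) (hij : i ≠ j) (hi : i ∉ Set.range t) (hj : j ∉ Set.range t) :
    Nonempty
      (((incidenceGraph r k Ω).induce
          {v : Fin r × {A : Finset Ω // A.card = k} |
            (v.1 = i ∨ v.1 = j) ∧ ∀ m, Disjoint v.2.1 (C m)}) ≃g
        bipartiteKneser n k) := by
  classical
  set S : Finset Ω := Finset.univ.biUnion C with hS
  have hScard : S.card = k * (r - 2) := by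
    rw [hS, Finset.card_biUnion (fun x _ y _ hxy => hCd x y hxy)]
    simp [hC, mul_comm]
  have hcompl : Sᶜ.card = n := by
    rw [Finset.card_compl, hScard, hΩ]
    omega
  have e : Fin n ≃ {x // x ∈ Sᶜ} :=
    (Fintype.equivFinOfCardEq (by rw [Fintype.card_coe, hcompl])).symm
  let emb : Fin n ↪ Ω := (Equiv.toEmbedding e).trans (Function.Embedding.subtype _)
  have hembmem : ∀ a, emb a ∈ Sᶜ := fun a => (e a).2
  have hembrange : ∀ x ∈ Sᶜ, ∃ a, emb a = x := by
    intro x hx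
    exact ⟨e.symm ⟨x, hx⟩, by simp [emb]⟩
  -- forward map
  have hdisjmap : ∀ (A : Finset (Fin n)) (m : Fin (r - 2)),
      Disjoint (A.map emb) (C m) := by
    intro A m
    rw [Finset.disjoint_left]
    intro x hx hxC
    obtain ⟨a, _, rfl⟩ := Finset.mem_map.mp hx
    have := hembmem a
    rw [Finset.mem_compl] at this
    exact this (Finset.mem_biUnion.mpr ⟨m, Finset.mem_univ m, hxC⟩)
  let Φ : ({A : Finset (Fin n) // A.card = k} × Bool) →
      {v : Fin r × {A : Finset Ω // A.card = k} //
        v ∈ {v : Fin r × {A : Finset Ω // A.card = k} |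
            (v.1 = i ∨ v.1 = j) ∧ ∀ m, Disjoint v.2.1 (C m)}} :=
    fun X => ⟨(bif X.2 then j else i, ⟨X.1.1.map emb, by
        rw [Finset.card_map]; exact X.1.2⟩),
      ⟨by cases X.2 <;> simp, fun m => hdisjmap X.1.1 m⟩⟩
  have hΦinj : Function.Injective Φ := by
    intro ⟨⟨A, hA⟩, ε⟩ ⟨⟨B, hB⟩, δ⟩ h
    have h1 : (bif ε then j else i) = (bif δ then j else i) :=
      congrArg (fun v => v.1.1) h
    have h2 : A.map emb = B.map emb := congrArg (fun v => v.1.2.1) h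
    have hAB : A = B := Finset.map_injective emb h2
    have hεδ : ε = δ := by
      cases ε <;> cases δ <;> simp_all <;> exact hij h1.symm
    subst hAB hεδ; rfl
  have hΦsurj : Function.Surjective Φ := by
    rintro ⟨⟨τ, ⟨A, hA⟩⟩, ⟨hτ, hdisj⟩⟩
    have hAsub : ∀ x ∈ A, x ∈ Sᶜ := by
      intro x hx
      rw [Finset.mem_compl]
      intro hxS
      obtain ⟨m, _, hm⟩ := Finset.mem_biUnion.mp hxS
      exact (Finset.disjoint_left.mp (hdisj m)) hx hm
    set B : Finset (Fin n) := A.preimage emb (Set.injOn_of_injective emb.injective) with hB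
    have hmap : B.map emb = A := by
      ext x
      simp only [Finset.mem_map, hB, Finset.mem_preimage]
      constructor
      · rintro ⟨a, ha, rfl⟩; exact ha
      · intro hx
        obtain ⟨a, rfl⟩ := hembrange x (hAsub x hx)
        exact ⟨a, hx, rfl⟩
    have hBcard : B.card = k := by
      have := Finset.card_map emb (s := B)
      rw [hmap] at this
      omega
    refine ⟨⟨⟨B, hBcard⟩, τ = j⟩, ?_⟩
    have hτ' : (bif decide (τ = j) then j else i) = τ := by
      rcases hτ with h | h <;> subst h <;> simp [hij, Ne.symm hij]
    simp only [Φ]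
    exact Subtype.ext (Prod.ext hτ' (Subtype.ext hmap))
  refine ⟨⟨(Equiv.ofBijective Φ ⟨hΦinj, hΦsurj⟩).symm, ?_⟩⟩
  have key : ∀ X Y, (bipartiteKneser n k).Adj X Y ↔
      ((incidenceGraph r k Ω).induce _).Adj (Φ X) (Φ Y) := by
    rintro ⟨⟨A, hA⟩, ε⟩ ⟨⟨B, hB⟩, δ⟩
    show (ε ≠ δ ∧ Disjoint A B) ↔
      ((bif ε then j else i) ≠ (bif δ then j else i) ∧
        Disjoint (A.map emb) (B.map emb))
    rw [Finset.disjoint_map]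
    constructor
    · rintro ⟨h1, h2⟩
      refine ⟨?_, h2⟩
      cases ε <;> cases δ <;> simp_all [hij, Ne.symm hij]
    · rintro ⟨h1, h2⟩
      refine ⟨?_, h2⟩
      intro h; subst h; exact h1 rfl
  intro X Y
  rw [key ((Equiv.ofBijective Φ ⟨hΦinj, hΦsurj⟩).symm X)
        ((Equiv.ofBijective Φ ⟨hΦinj, hΦsurj⟩).symm Y)]
  rw [show Φ ((Equiv.ofBijective Φ ⟨hΦinj, hΦsurj⟩).symm X) = X from
        Equiv.apply_symm_apply (Equiv.ofBijective Φ ⟨hΦinj, hΦsurj⟩) X,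
      show Φ ((Equiv.ofBijective Φ ⟨hΦinj, hΦsurj⟩).symm Y) = Y from
        Equiv.apply_symm_apply (Equiv.ofBijective Φ ⟨hΦinj, hΦsurj⟩) Y]
end

section
/- Let $n, k, r$ be positive integers with $n \geq 2k+1$ and $r \geq 2$, and let $\Omega$ be a finite set with $|\Omega| = n + k(r-2)$. Every automorphism $f$ of the incidence graph of $\Gamma(KG(n,k),r)$ that preserves types (i.e., $f(i,A)$ has first coordinate $i$ for every vertex $(i,A)$) is induced by a unique permutation $\sigma$ of $\Omega$, i.e., $f(i, A) = (i, \sigma(A))$ for all vertices $(i,A)$. Hence the group of type-preserving automorphisms is isomorphic to the symmetric group on $\Omega$. -/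
open Finset
set_option linter.unusedSectionVars false

namespace KGaux

variable {Ω : Type*} [Fintype Ω] [DecidableEq Ω]

/-- A pair of mutually inverse maps on `k`-subsets preserving the
"union has at most `k+1` elements" relation for triples. -/
structure GoodPair (k : ℕ) (g h : Finset Ω → Finset Ω) : Prop where
  gcard : ∀ A : Finset Ω, A.card = k → (g A).card = k
  hcard : ∀ A : Finset Ω, A.card = k → (h A).card = k
  hg : ∀ A : Finset Ω, A.card = k → h (g A) = A
  gh : ∀ A : Finset Ω, A.card = k → g (h A) = A
  h3 : ∀ A B C : Finset Ω, A.card = k → B.card = k → C.card = k →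
      ((A ∪ B ∪ C).card ≤ k + 1 ↔ (g A ∪ g B ∪ g C).card ≤ k + 1)

theorem GoodPair.symm {k : ℕ} {g h : Finset Ω → Finset Ω} (gp : GoodPair k g h) :
    GoodPair k h g where
  gcard := gp.hcard
  hcard := gp.gcard
  hg := gp.gh
  gh := gp.hg
  h3 := by
    intro A B C hA hB hC
    have := gp.h3 (h A) (h B) (h C) (gp.hcard A hA) (gp.hcard B hB) (gp.hcard C hC)
    rw [gp.gh A hA, gp.gh B hB, gp.gh C hC] at this
    exact this.symm

theorem GoodPair.ginj {k : ℕ} {g h : Finset Ω → Finset Ω} (gp : GoodPair k g h)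
    {A B : Finset Ω} (hA : A.card = k) (hB : B.card = k) (hAB : g A = g B) : A = B := by
  have := gp.hg A hA
  rw [hAB, gp.hg B hB] at this
  exact this.symm

theorem GoodPair.h2 {k : ℕ} {g h : Finset Ω → Finset Ω} (gp : GoodPair k g h)
    {A B : Finset Ω} (hA : A.card = k) (hB : B.card = k) :
    (A ∪ B).card ≤ k + 1 ↔ (g A ∪ g B).card ≤ k + 1 := by
  have := gp.h3 A B B hA hB hB
  rwa [union_assoc, union_self, union_assoc, union_self] at this

theorem card_union_ge {k : ℕ} {A B : Finset Ω} (hA : A.card = k) (hB : B.card = k)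
    (hne : A ≠ B) : k + 1 ≤ (A ∪ B).card := by
  by_contra hc
  push_neg at hc
  have h1 : A = A ∪ B := Finset.eq_of_subset_of_card_le subset_union_left (by omega)
  have h2 : B ⊆ A := h1 ▸ subset_union_right
  exact hne (Finset.eq_of_subset_of_card_le h2 (by omega)).symm

/-- Three distinct `k`-sets, pairwise intersecting in `k-1` points, not contained in
a common `(k+1)`-set, have a common `(k-1)`-intersection. -/
theorem tri {k : ℕ} {X Y Z : Finset Ω} (hX : X.card = k) (hY : Y.card = k) (hZ : Z.card = k)
    (hXY : X ≠ Y) (hXZ : X ≠ Z) (hYZ : Y ≠ Z)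
    (uXY : (X ∪ Y).card ≤ k + 1) (uXZ : (X ∪ Z).card ≤ k + 1) (uYZ : (Y ∪ Z).card ≤ k + 1)
    (hbig : k + 2 ≤ (X ∪ Y ∪ Z).card) :
    X ∩ Y = X ∩ Z ∧ X ∩ Y = Y ∩ Z := by
  have hk : 1 ≤ k := by
    rcases Nat.eq_zero_or_pos k with h0 | h1
    · exfalso
      have hX0 : X = ∅ := Finset.card_eq_zero.mp (by omega)
      have hY0 : Y = ∅ := Finset.card_eq_zero.mp (by omega)
      exact hXY (hX0.trans hY0.symm)
    · exact h1
  have uXY' : (X ∪ Y).card = k + 1 := le_antisymm uXY (card_union_ge hX hY hXY)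
  -- find z ∈ Z \ (X ∪ Y)
  have hz : ∃ z ∈ Z, z ∉ X ∪ Y := by
    by_contra hc
    push_neg at hc
    have : X ∪ Y ∪ Z ⊆ X ∪ Y := by
      intro w hw
      rcases Finset.mem_union.mp hw with h | h
      · exact h
      · exact hc w h
    have := Finset.card_le_card this
    omega
  obtain ⟨z, hzZ, hzXY⟩ := hz
  have hzX : z ∉ X := fun h => hzXY (mem_union_left _ h)
  have hzY : z ∉ Y := fun h => hzXY (mem_union_right _ h)
  have cZX : (Z ∩ X).card = k - 1 := by
    have h1 := Finset.card_union_add_card_inter Z X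
    have h2 : (Z ∪ X).card = k + 1 := by
      rw [union_comm]; exact le_antisymm uXZ (card_union_ge hX hZ hXZ)
    omega
  have cZY : (Z ∩ Y).card = k - 1 := by
    have h1 := Finset.card_union_add_card_inter Z Y
    have h2 : (Z ∪ Y).card = k + 1 := by
      rw [union_comm]; exact le_antisymm uYZ (card_union_ge hY hZ hYZ)
    omega
  have cXY : (X ∩ Y).card = k - 1 := by
    have h1 := Finset.card_union_add_card_inter X Y
    omega
  have cez : (Z.erase z).card = k - 1 := by rw [Finset.card_erase_of_mem hzZ, hZ]
  have hZX : Z ∩ X = Z.erase z := by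
    apply Finset.eq_of_subset_of_card_le
    · intro w hw
      rcases Finset.mem_inter.mp hw with ⟨h1, h2⟩
      exact Finset.mem_erase.mpr ⟨fun he => hzX (he ▸ h2), h1⟩
    · omega
  have hZY : Z ∩ Y = Z.erase z := by
    apply Finset.eq_of_subset_of_card_le
    · intro w hw
      rcases Finset.mem_inter.mp hw with ⟨h1, h2⟩
      exact Finset.mem_erase.mpr ⟨fun he => hzY (he ▸ h2), h1⟩
    · omega
  have hXYe : X ∩ Y = Z.erase z := by
    apply (Finset.eq_of_subset_of_card_le ?_ ?_).symm
    · intro w hw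
      have hwZ : w ∈ Z ∩ X := hZX ▸ hw
      have hwY : w ∈ Z ∩ Y := hZY ▸ hw
      exact Finset.mem_inter.mpr ⟨(Finset.mem_inter.mp hwZ).2, (Finset.mem_inter.mp hwY).2⟩
    · omega
  constructor
  · rw [hXYe, inter_comm]; exact hZX.symm
  · rw [hXYe, inter_comm]; exact hZY.symm


section Der

variable {k : ℕ} {g h : Finset Ω → Finset Ω}

/-- The derived map on `(k-1)`-sets: intersection of the images of two extensions. -/
noncomputable def der (g : Finset Ω → Finset Ω) (T : Finset Ω) : Finset Ω :=
  if hex : ∃ p : Ω × Ω, p.1 ≠ p.2 ∧ p.1 ∉ T ∧ p.2 ∉ T then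
    g (insert hex.choose.1 T) ∩ g (insert hex.choose.2 T)
  else ∅

theorem insert_ne_insert {T : Finset Ω} {a b : Ω} (ha : a ∉ T) (hab : a ≠ b) :
    insert a T ≠ insert b T := by
  intro hE
  have : a ∈ insert b T := hE ▸ Finset.mem_insert_self a T
  rcases Finset.mem_insert.mp this with h | h
  · exact hab h
  · exact ha h

theorem card_insert2 {T : Finset Ω} {a b : Ω} (ha : a ∉ T) (hb : b ∉ T) (hab : a ≠ b) :
    (insert a T ∪ insert b T).card = T.card + 2 := by
  have : insert a T ∪ insert b T = insert a (insert b T) := by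
    rw [Finset.insert_union, Finset.union_insert, Finset.union_self]
  rw [this, Finset.card_insert_of_notMem, Finset.card_insert_of_notMem hb]
  simp only [Finset.mem_insert]
  push_neg
  exact ⟨hab, ha⟩

theorem card_insert3 {T : Finset Ω} {a b c : Ω} (ha : a ∉ T) (hb : b ∉ T) (hc : c ∉ T)
    (hab : a ≠ b) (hac : a ≠ c) (hbc : b ≠ c) :
    (insert a T ∪ insert b T ∪ insert c T).card = T.card + 3 := by
  have : insert a T ∪ insert b T ∪ insert c T = insert a (insert b (insert c T)) := by
    ext x
    simp only [Finset.mem_union, Finset.mem_insert]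
    tauto
  rw [this, Finset.card_insert_of_notMem, Finset.card_insert_of_notMem,
    Finset.card_insert_of_notMem hc]
  · simp only [Finset.mem_insert]; push_neg; exact ⟨hbc, hb⟩
  · simp only [Finset.mem_insert]; push_neg; exact ⟨hab, hac, ha⟩

variable (gp : GoodPair (k + 1) g h) (hk : 1 ≤ k) (hN : 2 * (k + 1) + 1 ≤ Fintype.card Ω)

include gp

theorem Dwd {T : Finset Ω} (hT : T.card = k) {a b c : Ω} (ha : a ∉ T) (hb : b ∉ T)
    (hc : c ∉ T) (hab : a ≠ b) (hac : a ≠ c) (hbc : b ≠ c) :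
    g (insert a T) ∩ g (insert b T) = g (insert a T) ∩ g (insert c T) := by
  set X := g (insert a T) with hXdef
  set Y := g (insert b T) with hYdef
  set Z := g (insert c T) with hZdef
  have cA : (insert a T).card = k + 1 := by rw [Finset.card_insert_of_notMem ha, hT]
  have cB : (insert b T).card = k + 1 := by rw [Finset.card_insert_of_notMem hb, hT]
  have cC : (insert c T).card = k + 1 := by rw [Finset.card_insert_of_notMem hc, hT]
  have hX : X.card = k + 1 := gp.gcard _ cA
  have hY : Y.card = k + 1 := gp.gcard _ cB
  have hZ : Z.card = k + 1 := gp.gcard _ cC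
  have hXY : X ≠ Y := fun hE => insert_ne_insert ha hab (gp.ginj cA cB hE)
  have hXZ : X ≠ Z := fun hE => insert_ne_insert ha hac (gp.ginj cA cC hE)
  have hYZ : Y ≠ Z := fun hE => insert_ne_insert hb hbc (gp.ginj cB cC hE)
  have uXY : (X ∪ Y).card ≤ k + 2 := by
    rw [hXdef, hYdef]
    refine (gp.h2 cA cB).mp ?_
    rw [card_insert2 ha hb hab, hT]
  have uXZ : (X ∪ Z).card ≤ k + 2 := by
    rw [hXdef, hZdef]
    refine (gp.h2 cA cC).mp ?_
    rw [card_insert2 ha hc hac, hT]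
  have uYZ : (Y ∪ Z).card ≤ k + 2 := by
    rw [hYdef, hZdef]
    refine (gp.h2 cB cC).mp ?_
    rw [card_insert2 hb hc hbc, hT]
  have hbig : k + 3 ≤ (X ∪ Y ∪ Z).card := by
    by_contra hcon
    push_neg at hcon
    have := (gp.h3 _ _ _ cA cB cC).mpr (by rw [← hXdef, ← hYdef, ← hZdef]; omega)
    rw [card_insert3 ha hb hc hab hac hbc, hT] at this
    omega
  exact (tri hX hY hZ hXY hXZ hYZ uXY uXZ uYZ hbig).1

theorem Dall {T : Finset Ω} (hT : T.card = k) {a b c d : Ω} (ha : a ∉ T) (hb : b ∉ T)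
    (hc : c ∉ T) (hd : d ∉ T) (hab : a ≠ b) (hcd : c ≠ d) :
    g (insert a T) ∩ g (insert b T) = g (insert c T) ∩ g (insert d T) := by
  have comm : ∀ x y : Ω, g (insert x T) ∩ g (insert y T) = g (insert y T) ∩ g (insert x T) :=
    fun x y => inter_comm _ _
  by_cases hac : a = c
  · subst hac
    by_cases hbd : b = d
    · subst hbd; rfl
    · exact Dwd gp hT ha hb hd hab hcd hbd
  · by_cases hbc : b = c
    · subst hbc
      by_cases had : a = d
      · subst had; exact comm a b
      · rw [comm a b]
        exact Dwd gp hT hb ha hd (Ne.symm hab) hcd had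
    · have h1 : g (insert a T) ∩ g (insert b T) = g (insert a T) ∩ g (insert c T) :=
        Dwd gp hT ha hb hc hab hac hbc
      by_cases had : a = d
      · subst had
        rw [h1, comm a c, comm c a]
      · have h2 : g (insert c T) ∩ g (insert a T) = g (insert c T) ∩ g (insert d T) :=
          Dwd gp hT hc ha hd (Ne.symm hac) hcd had
        rw [h1, comm a c, h2]

include hk hN

theorem exists_two_outside {T : Finset Ω} (hT : T.card = k) :
    ∃ a b : Ω, a ≠ b ∧ a ∉ T ∧ b ∉ T := by
  have hcc : 2 ≤ Tᶜ.card := by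
    rw [Finset.card_compl, hT]; omega
  obtain ⟨a, haT, b, hbT, hab⟩ := Finset.one_lt_card.mp hcc
  exact ⟨a, b, hab, Finset.mem_compl.mp haT, Finset.mem_compl.mp hbT⟩

theorem der_eq {T : Finset Ω} (hT : T.card = k) {a b : Ω} (ha : a ∉ T) (hb : b ∉ T)
    (hab : a ≠ b) : der g T = g (insert a T) ∩ g (insert b T) := by
  have hex : ∃ p : Ω × Ω, p.1 ≠ p.2 ∧ p.1 ∉ T ∧ p.2 ∉ T := ⟨(a, b), hab, ha, hb⟩
  rw [der, dif_pos hex]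
  exact Dall gp hT hex.choose_spec.2.1 hex.choose_spec.2.2 ha hb hex.choose_spec.1 hab

theorem der_card {T : Finset Ω} (hT : T.card = k) : (der g T).card = k := by
  obtain ⟨a, b, hab, ha, hb⟩ := exists_two_outside gp hk hN hT
  rw [der_eq gp hk hN hT ha hb hab]
  have cA : (insert a T).card = k + 1 := by rw [Finset.card_insert_of_notMem ha, hT]
  have cB : (insert b T).card = k + 1 := by rw [Finset.card_insert_of_notMem hb, hT]
  have h1 := Finset.card_union_add_card_inter (g (insert a T)) (g (insert b T))
  have h2 : (g (insert a T) ∪ g (insert b T)).card ≤ k + 2 := by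
    refine (gp.h2 cA cB).mp ?_
    rw [card_insert2 ha hb hab, hT]
  have h3 : k + 2 ≤ (g (insert a T) ∪ g (insert b T)).card :=
    card_union_ge (gp.gcard _ cA) (gp.gcard _ cB)
      (fun hE => insert_ne_insert ha hab (gp.ginj cA cB hE))
  have h4 := gp.gcard _ cA
  have h5 := gp.gcard _ cB
  omega

theorem der_subset {T A : Finset Ω} (hT : T.card = k) (hA : A.card = k + 1) (hTA : T ⊆ A) :
    der g T ⊆ g A := by
  have hcd : (A \ T).card = 1 := by
    rw [Finset.card_sdiff_of_subset hTA, hA, hT]; omega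
  obtain ⟨c, hc⟩ := Finset.card_eq_one.mp hcd
  have hcA : c ∈ A := (Finset.mem_sdiff.mp (hc ▸ Finset.mem_singleton_self c)).1
  have hcT : c ∉ T := (Finset.mem_sdiff.mp (hc ▸ Finset.mem_singleton_self c)).2
  have hAeq : A = insert c T := by
    apply (Finset.eq_of_subset_of_card_le ?_ ?_).symm
    · intro x hx
      rcases Finset.mem_insert.mp hx with h | h
      · exact h ▸ hcA
      · exact hTA h
    · rw [Finset.card_insert_of_notMem hcT, hA, hT]
  obtain ⟨a, b, hab, ha, hb⟩ := exists_two_outside gp hk hN hT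
  have : ∃ b', b' ∉ T ∧ b' ≠ c := by
    by_cases hac : a = c
    · exact ⟨b, hb, fun hE => hab (hac ▸ hE ▸ rfl)⟩
    · exact ⟨a, ha, hac⟩
  obtain ⟨b', hb', hb'c⟩ := this
  rw [der_eq gp hk hN hT hcT hb' (Ne.symm hb'c), hAeq]
  exact inter_subset_left

theorem der_inv {T : Finset Ω} (hT : T.card = k) : der h (der g T) = T := by
  obtain ⟨a, b, hab, ha, hb⟩ := exists_two_outside gp hk hN hT
  have cA : (insert a T).card = k + 1 := by rw [Finset.card_insert_of_notMem ha, hT]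
  have cB : (insert b T).card = k + 1 := by rw [Finset.card_insert_of_notMem hb, hT]
  set X := g (insert a T) with hXdef
  set Y := g (insert b T) with hYdef
  have hX : X.card = k + 1 := gp.gcard _ cA
  have hY : Y.card = k + 1 := gp.gcard _ cB
  have hS : der g T = X ∩ Y := der_eq gp hk hN hT ha hb hab
  have hScard : (der g T).card = k := der_card gp hk hN hT
  have hXY : X ≠ Y := fun hE => insert_ne_insert ha hab (gp.ginj cA cB hE)
  -- X = insert u (X ∩ Y) for u the extra point
  have hsx : X ∩ Y ⊆ X := inter_subset_left
  have hsy : X ∩ Y ⊆ Y := inter_subset_right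
  have hux : ∃ u, u ∈ X ∧ u ∉ X ∩ Y := by
    by_contra hcon
    push_neg at hcon
    have : X ⊆ X ∩ Y := fun x hx => hcon x hx
    have := Finset.card_le_card this
    rw [← hS] at this
    omega
  obtain ⟨u, huX, huS⟩ := hux
  have hvy : ∃ v, v ∈ Y ∧ v ∉ X ∩ Y := by
    by_contra hcon
    push_neg at hcon
    have : Y ⊆ X ∩ Y := fun x hx => hcon x hx
    have := Finset.card_le_card this
    rw [← hS] at this
    omega
  obtain ⟨v, hvY, hvS⟩ := hvy
  have hXeq : X = insert u (X ∩ Y) := by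
    apply (Finset.eq_of_subset_of_card_le ?_ ?_).symm
    · intro x hx
      rcases Finset.mem_insert.mp hx with hr | hr
      · exact hr ▸ huX
      · exact hsx hr
    · rw [Finset.card_insert_of_notMem huS, hX]
      rw [← hS]; omega
  have hYeq : Y = insert v (X ∩ Y) := by
    apply (Finset.eq_of_subset_of_card_le ?_ ?_).symm
    · intro x hx
      rcases Finset.mem_insert.mp hx with hr | hr
      · exact hr ▸ hvY
      · exact hsy hr
    · rw [Finset.card_insert_of_notMem hvS, hY]
      rw [← hS]; omega
  have huv : u ≠ v := by
    intro hE
    exact huS (Finset.mem_inter.mpr ⟨huX, by rw [hE]; exact hvY⟩)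
  rw [hS]
  have hder : der h (X ∩ Y) = h X ∩ h Y := by
    have := der_eq (gp := gp.symm) hk hN (by rw [← hS]; exact hScard) huS hvS huv
    rw [← hXeq, ← hYeq] at this
    exact this
  rw [hder, hXdef, hYdef, gp.hg _ cA, gp.hg _ cB]
  ext x
  simp only [Finset.mem_inter, Finset.mem_insert]
  constructor
  · rintro ⟨h1 | h1, h2 | h2⟩
    · exact absurd (h1.symm.trans h2) hab
    · exact h2
    · exact h1
    · exact h1
  · intro hx
    exact ⟨Or.inr hx, Or.inr hx⟩

theorem der_h3_forward (hkN : k + 1 ≤ Fintype.card Ω) {T1 T2 T3 : Finset Ω}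
    (h1 : T1.card = k) (h2 : T2.card = k) (h3 : T3.card = k)
    (hu : (T1 ∪ T2 ∪ T3).card ≤ k + 1) :
    (der g T1 ∪ der g T2 ∪ der g T3).card ≤ k + 1 := by
  obtain ⟨A, hsub, hAcard⟩ :=
    Finset.exists_superset_card_eq (s := T1 ∪ T2 ∪ T3) (n := k + 1) hu hkN
  have hA1 : T1 ⊆ A := (subset_union_left.trans subset_union_left).trans hsub
  have hA2 : T2 ⊆ A := (subset_union_right.trans (subset_union_left)).trans hsub
  have hA3 : T3 ⊆ A := subset_union_right.trans hsub
  have hsub' : der g T1 ∪ der g T2 ∪ der g T3 ⊆ g A := by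
    apply Finset.union_subset (Finset.union_subset ?_ ?_) ?_
    · exact der_subset gp hk hN h1 hAcard hA1
    · exact der_subset gp hk hN h2 hAcard hA2
    · exact der_subset gp hk hN h3 hAcard hA3
  calc (der g T1 ∪ der g T2 ∪ der g T3).card ≤ (g A).card := Finset.card_le_card hsub'
  _ = k + 1 := gp.gcard A hAcard

theorem der_pair : GoodPair k (der g) (der h) where
  gcard := fun T hT => der_card gp hk hN hT
  hcard := fun T hT => der_card gp.symm hk hN hT
  hg := fun T hT => der_inv gp hk hN hT
  gh := fun T hT => der_inv gp.symm hk hN hT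
  h3 := by
    intro T1 T2 T3 h1 h2 h3
    have hkN : k + 1 ≤ Fintype.card Ω := by omega
    constructor
    · exact der_h3_forward gp hk hN hkN h1 h2 h3
    · intro himg
      have c1 : (der g T1).card = k := der_card gp hk hN h1
      have c2 : (der g T2).card = k := der_card gp hk hN h2
      have c3 : (der g T3).card = k := der_card gp hk hN h3
      have := der_h3_forward gp.symm hk hN hkN c1 c2 c3 himg
      rwa [der_inv gp hk hN h1, der_inv gp hk hN h2, der_inv gp hk hN h3] at this

end Der


theorem base_case {g h : Finset Ω → Finset Ω} (gp : GoodPair 1 g h) :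
    ∃ σ : Equiv.Perm Ω, ∀ A : Finset Ω, A.card = 1 → g A = A.image σ := by
  have hsing : ∀ x : Ω, ∃ y : Ω, g {x} = {y} := by
    intro x
    exact Finset.card_eq_one.mp (gp.gcard {x} (Finset.card_singleton x))
  classical
  choose e he using hsing
  have hinj : Function.Injective e := by
    intro x y hxy
    have h1 : g {x} = g {y} := by rw [he x, he y, hxy]
    have := gp.ginj (Finset.card_singleton x) (Finset.card_singleton y) h1
    exact Finset.singleton_injective this
  refine ⟨Equiv.ofBijective e (Finite.injective_iff_bijective.mp hinj), ?_⟩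
  intro A hA
  obtain ⟨x, rfl⟩ := Finset.card_eq_one.mp hA
  rw [he x, Finset.image_singleton, Equiv.ofBijective_apply]

theorem main_lemma : ∀ k : ℕ, 1 ≤ k → 2 * k + 1 ≤ Fintype.card Ω →
    ∀ g h : Finset Ω → Finset Ω, GoodPair k g h →
    ∃ σ : Equiv.Perm Ω, ∀ A : Finset Ω, A.card = k → g A = A.image σ := by
  intro k
  induction k with
  | zero => omega
  | succ m ih =>
    intro hk hN g h gp
    rcases Nat.eq_zero_or_pos m with hm | hm
    · subst hm; exact base_case gp
    · have hN' : 2 * m + 1 ≤ Fintype.card Ω := by omega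
      obtain ⟨σ, hσ⟩ := ih hm hN' (der g) (der h) (der_pair gp hm hN)
      refine ⟨σ, ?_⟩
      intro A hA
      have hsub : A.image σ ⊆ g A := by
        intro y hy
        obtain ⟨x, hxA, rfl⟩ := Finset.mem_image.mp hy
        obtain ⟨z, hzA, hzx⟩ := Finset.exists_mem_ne (by omega : 1 < A.card) x
        have hT : (A.erase z).card = m := by
          rw [Finset.card_erase_of_mem hzA, hA]
          omega
        have hxT : x ∈ A.erase z := Finset.mem_erase.mpr ⟨fun hE => hzx hE.symm, hxA⟩
        have : σ x ∈ (A.erase z).image σ := Finset.mem_image_of_mem σ hxT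
        rw [← hσ (A.erase z) hT] at this
        exact der_subset gp hm hN hT hA (Finset.erase_subset z A) this
      apply (Finset.eq_of_subset_of_card_le hsub ?_).symm
      rw [Finset.card_image_of_injective A σ.injective, hA, gp.gcard A hA]


theorem choose_lt {N k : ℕ} (hk : 1 ≤ k) (hN : 2 * k + 1 ≤ N) :
    (N - (k + 2)).choose k < (N - (k + 1)).choose k := by
  obtain ⟨m, hm⟩ : ∃ m, N - (k + 2) = m := ⟨_, rfl⟩
  have hm2 : N - (k + 1) = m + 1 := by omega
  obtain ⟨k', hk'⟩ : ∃ k', k = k' + 1 := ⟨k - 1, by omega⟩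
  rw [hm, hm2, hk', Nat.choose_succ_succ]
  have hpos : 0 < m.choose k' := Nat.choose_pos (by omega)
  have hr : m.choose k'.succ = m.choose (k' + 1) := rfl
  omega

theorem choose_iff_aux {N k u u' : ℕ} (hk : 1 ≤ k) (hN : 2 * k + 1 ≤ N)
    (h : (N - u).choose k = (N - u').choose k) (hu : u ≤ k + 1) (hu' : k + 2 ≤ u') :
    False := by
  have c1 : (N - (k + 1)).choose k ≤ (N - u).choose k :=
    Nat.choose_le_choose k (by omega)
  have c2 : (N - u').choose k ≤ (N - (k + 2)).choose k :=
    Nat.choose_le_choose k (by omega)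
  have c3 := choose_lt hk hN
  omega

theorem choose_iff {N k u u' : ℕ} (hk : 1 ≤ k) (hN : 2 * k + 1 ≤ N)
    (h : (N - u).choose k = (N - u').choose k) : (u ≤ k + 1 ↔ u' ≤ k + 1) := by
  constructor
  · intro hu
    by_contra hc
    exact choose_iff_aux hk hN h hu (by omega)
  · intro hu
    by_contra hc
    exact choose_iff_aux hk hN h.symm hu (by omega)

theorem subset_compl_iff_disj {U D : Finset Ω} : D ⊆ Uᶜ ↔ Disjoint U D := by
  constructor
  · intro h
    rw [Finset.disjoint_left]
    intro a haU haD
    exact (Finset.mem_compl.mp (h haD)) haU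
  · intro h a haD
    exact Finset.mem_compl.mpr (fun haU => (Finset.disjoint_left.mp h haU) haD)

theorem h3_of_cross {k : ℕ} (hk : 1 ≤ k) (hN : 2 * k + 1 ≤ Fintype.card Ω)
    {g g' h' : Finset Ω → Finset Ω}
    (hgcard : ∀ A : Finset Ω, A.card = k → (g A).card = k)
    (hg'card : ∀ A : Finset Ω, A.card = k → (g' A).card = k)
    (hh'card : ∀ A : Finset Ω, A.card = k → (h' A).card = k)
    (hh'g' : ∀ A : Finset Ω, A.card = k → h' (g' A) = A)
    (hg'h' : ∀ A : Finset Ω, A.card = k → g' (h' A) = A)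
    (cross : ∀ A B : Finset Ω, A.card = k → B.card = k →
      (Disjoint A B ↔ Disjoint (g A) (g' B)))
    (A B C : Finset Ω) (hA : A.card = k) (hB : B.card = k) (hC : C.card = k) :
    ((A ∪ B ∪ C).card ≤ k + 1 ↔ (g A ∪ g B ∪ g C).card ≤ k + 1) := by
  classical
  set U := A ∪ B ∪ C with hU
  set U' := g A ∪ g B ∪ g C with hU'
  have hmem : ∀ D : Finset Ω, D ∈ Finset.powersetCard k Uᶜ ↔ (D.card = k ∧
      Disjoint A D ∧ Disjoint B D ∧ Disjoint C D) := by
    intro D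
    rw [Finset.mem_powersetCard, subset_compl_iff_disj, hU, Finset.disjoint_union_left,
      Finset.disjoint_union_left]
    tauto
  have hmem' : ∀ D : Finset Ω, D ∈ Finset.powersetCard k U'ᶜ ↔ (D.card = k ∧
      Disjoint (g A) D ∧ Disjoint (g B) D ∧ Disjoint (g C) D) := by
    intro D
    rw [Finset.mem_powersetCard, subset_compl_iff_disj, hU', Finset.disjoint_union_left,
      Finset.disjoint_union_left]
    tauto
  have hcount : (Finset.powersetCard k Uᶜ).card = (Finset.powersetCard k U'ᶜ).card := by
    apply Finset.card_bij' (fun D _ => g' D) (fun D _ => h' D)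
    · intro D hD
      rw [hmem] at hD
      rw [hmem']
      exact ⟨hg'card D hD.1, (cross A D hA hD.1).mp hD.2.1,
        (cross B D hB hD.1).mp hD.2.2.1, (cross C D hC hD.1).mp hD.2.2.2⟩
    · intro D hD
      rw [hmem'] at hD
      rw [hmem]
      refine ⟨hh'card D hD.1, ?_, ?_, ?_⟩
      · exact (cross A (h' D) hA (hh'card D hD.1)).mpr (by rw [hg'h' D hD.1]; exact hD.2.1)
      · exact (cross B (h' D) hB (hh'card D hD.1)).mpr (by rw [hg'h' D hD.1]; exact hD.2.2.1)
      · exact (cross C (h' D) hC (hh'card D hD.1)).mpr (by rw [hg'h' D hD.1]; exact hD.2.2.2)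
    · intro D hD
      rw [hmem] at hD
      exact hh'g' D hD.1
    · intro D hD
      rw [hmem'] at hD
      exact hg'h' D hD.1
  rw [Finset.card_powersetCard, Finset.card_powersetCard, Finset.card_compl,
    Finset.card_compl] at hcount
  exact choose_iff hk hN hcount

theorem perm_ext {k : ℕ} (hk : 1 ≤ k) (hN : 2 * k + 1 ≤ Fintype.card Ω)
    {σ τ : Equiv.Perm Ω}
    (hst : ∀ A : Finset Ω, A.card = k → A.image σ = A.image τ) : σ = τ := by
  apply Equiv.ext
  intro x
  obtain ⟨A, hxA, hAcard⟩ : ∃ A : Finset Ω, {x} ⊆ A ∧ A.card = k :=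
    Finset.exists_superset_card_eq (by simp; omega) (by omega)
  have hxA' : x ∈ A := hxA (Finset.mem_singleton_self x)
  obtain ⟨t, htsub, htcard⟩ : ∃ t ⊆ Aᶜ, t.card = k - 1 := by
    apply Finset.exists_subset_card_eq
    rw [Finset.card_compl, hAcard]; omega
  have hxt : x ∉ t := fun hx => (Finset.mem_compl.mp (htsub hx)) hxA'
  set A' := insert x t with hA'
  have hA'card : A'.card = k := by
    rw [hA', Finset.card_insert_of_notMem hxt, htcard]; omega
  have hinter : A ∩ A' = {x} := by
    ext y
    simp only [Finset.mem_inter, hA', Finset.mem_insert, Finset.mem_singleton]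
    constructor
    · rintro ⟨hyA, hy | hy⟩
      · exact hy
      · exact absurd hyA (Finset.mem_compl.mp (htsub hy))
    · rintro rfl
      exact ⟨hxA', Or.inl rfl⟩
  have h1 : A.image σ ∩ A'.image σ = {σ x} := by
    rw [← Finset.image_inter _ _ σ.injective, hinter, Finset.image_singleton]
  have h2 : A.image τ ∩ A'.image τ = {τ x} := by
    rw [← Finset.image_inter _ _ τ.injective, hinter, Finset.image_singleton]
  have h3 : ({σ x} : Finset Ω) = {τ x} := by
    rw [← h1, ← h2, hst A hAcard, hst A' hA'card]
  exact Finset.singleton_injective h3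

theorem agree_lemma {k : ℕ} (hk : 1 ≤ k) (hN : 2 * k + 1 ≤ Fintype.card Ω)
    (σ τ : Equiv.Perm Ω)
    (cross : ∀ A B : Finset Ω, A.card = k → B.card = k →
      (Disjoint A B ↔ Disjoint (A.image σ) (B.image τ)))
    (A : Finset Ω) (hA : A.card = k) : A.image σ = A.image τ := by
  have hsub : A.image τ ⊆ A.image σ := by
    intro x hx
    obtain ⟨a, haA, rfl⟩ := Finset.mem_image.mp hx
    by_contra hxs
    -- build a k-set B' containing τ a inside (A.image σ)ᶜ
    have hxc : τ a ∈ (A.image σ)ᶜ := Finset.mem_compl.mpr hxs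
    obtain ⟨t, htsub, htcard⟩ : ∃ t ⊆ ((A.image σ)ᶜ).erase (τ a), t.card = k - 1 := by
      apply Finset.exists_subset_card_eq
      rw [Finset.card_erase_of_mem hxc, Finset.card_compl,
        Finset.card_image_of_injective A σ.injective, hA]
      omega
    have hxt : τ a ∉ t := fun hmem => (Finset.mem_erase.mp (htsub hmem)).1 rfl
    set B' := insert (τ a) t with hB'
    have hB'card : B'.card = k := by
      rw [hB', Finset.card_insert_of_notMem hxt, htcard]; omega
    have hB'sub : B' ⊆ (A.image σ)ᶜ := by
      rw [hB']
      apply Finset.insert_subset hxc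
      exact htsub.trans (Finset.erase_subset _ _)
    set B := B'.image ⇑τ.symm with hB
    have hBcard : B.card = k := by
      rw [hB, Finset.card_image_of_injective B' τ.symm.injective, hB'card]
    have hBB' : B.image ⇑τ = B' := by
      rw [hB, Finset.image_image]
      simp
    have hdisj : Disjoint (A.image σ) (B.image τ) := by
      rw [hBB']
      exact subset_compl_iff_disj.mp hB'sub
    have hAB : Disjoint A B := (cross A B hA hBcard).mpr hdisj
    have haB : a ∈ B := by
      rw [hB]
      have : τ.symm (τ a) ∈ B'.image ⇑τ.symm :=
        Finset.mem_image_of_mem _ (hB' ▸ Finset.mem_insert_self _ _)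
      simpa using this
    exact (Finset.disjoint_left.mp hAB haA) haB
  apply (Finset.eq_of_subset_of_card_le hsub ?_).symm
  rw [Finset.card_image_of_injective A σ.injective,
    Finset.card_image_of_injective A τ.injective]

end KGaux

/-- Every type-preserving automorphism of the incidence graph of
`Γ(KG(n,k),r)` is induced by a unique permutation `σ` of `Ω`, i.e.
`f (i, A) = (i, σ(A))` for all vertices `(i, A)`. Hence the group of
type-preserving automorphisms of `Γ(KG(n,k),r)` is isomorphic to the symmetric
group on `Ω`. -/
theorem typePreserving_aut_from_perm (n k r : ℕ) (hk : 0 < k)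
    (hn : 2 * k + 1 ≤ n) (hr : 2 ≤ r) (Ω : Type*) [Fintype Ω] [DecidableEq Ω]
    (hΩ : Fintype.card Ω = n + k * (r - 2))
    (f : incidenceGraph r k Ω ≃g incidenceGraph r k Ω)
    (hf : ∀ v, (f v).1 = v.1) :
    ∃! σ : Equiv.Perm Ω, ∀ v, ((f v).2 : Finset Ω) = (v.2 : Finset Ω).image σ := by
  classical
  open KGaux in
  have hN : 2 * k + 1 ≤ Fintype.card Ω := by
    rw [hΩ]; exact le_trans hn (Nat.le_add_right _ _)
  have hfsymm : ∀ v, (f.symm v).1 = v.1 := by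
    intro v
    have := hf (f.symm v)
    rw [f.apply_symm_apply] at this
    exact this.symm
  set G : Fin r → Finset Ω → Finset Ω := fun i A =>
    if hA : A.card = k then ((f (i, ⟨A, hA⟩)).2 : Finset Ω) else ∅ with hGset
  set H : Fin r → Finset Ω → Finset Ω := fun i A =>
    if hA : A.card = k then ((f.symm (i, ⟨A, hA⟩)).2 : Finset Ω) else ∅ with hHset
  have hGdef : ∀ (i : Fin r) (A : Finset Ω) (hA : A.card = k),
      G i A = ((f (i, ⟨A, hA⟩)).2 : Finset Ω) := by
    intro i A hA
    rw [hGset]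
    simp only [dif_pos hA]
  have hHdef : ∀ (i : Fin r) (A : Finset Ω) (hA : A.card = k),
      H i A = ((f.symm (i, ⟨A, hA⟩)).2 : Finset Ω) := by
    intro i A hA
    rw [hHset]
    simp only [dif_pos hA]
  have hGcard : ∀ (i : Fin r) (A : Finset Ω), A.card = k → (G i A).card = k := by
    intro i A hA
    rw [hGdef i A hA]
    exact (f (i, ⟨A, hA⟩)).2.2
  have hHcard : ∀ (i : Fin r) (A : Finset Ω), A.card = k → (H i A).card = k := by
    intro i A hA
    rw [hHdef i A hA]
    exact (f.symm (i, ⟨A, hA⟩)).2.2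
  have hfG : ∀ (i : Fin r) (A : Finset Ω) (hA : A.card = k),
      f (i, ⟨A, hA⟩) = (i, ⟨G i A, hGcard i A hA⟩) := by
    intro i A hA
    have h1 : (f (i, ⟨A, hA⟩)).1 = i := hf (i, ⟨A, hA⟩)
    have h2 : (f (i, ⟨A, hA⟩)).2 = ⟨G i A, hGcard i A hA⟩ :=
      Subtype.ext (hGdef i A hA).symm
    exact Prod.ext h1 h2
  have hfsG : ∀ (i : Fin r) (A : Finset Ω) (hA : A.card = k),
      f.symm (i, ⟨A, hA⟩) = (i, ⟨H i A, hHcard i A hA⟩) := by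
    intro i A hA
    have h1 : (f.symm (i, ⟨A, hA⟩)).1 = i := hfsymm (i, ⟨A, hA⟩)
    have h2 : (f.symm (i, ⟨A, hA⟩)).2 = ⟨H i A, hHcard i A hA⟩ :=
      Subtype.ext (hHdef i A hA).symm
    exact Prod.ext h1 h2
  have hHG : ∀ (i : Fin r) (A : Finset Ω), A.card = k → H i (G i A) = A := by
    intro i A hA
    rw [hHdef i _ (hGcard i A hA)]
    rw [show ((i, ⟨G i A, hGcard i A hA⟩) : Fin r × {A : Finset Ω // A.card = k})
        = f (i, ⟨A, hA⟩) from (hfG i A hA).symm]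
    rw [f.symm_apply_apply]
  have hGH : ∀ (i : Fin r) (A : Finset Ω), A.card = k → G i (H i A) = A := by
    intro i A hA
    rw [hGdef i _ (hHcard i A hA)]
    rw [show ((i, ⟨H i A, hHcard i A hA⟩) : Fin r × {A : Finset Ω // A.card = k})
        = f.symm (i, ⟨A, hA⟩) from (hfsG i A hA).symm]
    rw [f.apply_symm_apply]
  have key : ∀ (i j : Fin r), i ≠ j → ∀ (A B : Finset Ω) (hA : A.card = k)
      (hB : B.card = k), (Disjoint A B ↔ Disjoint (G i A) (G j B)) := by
    intro i j hij A B hA hB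
    have h2 := f.map_adj_iff (v := (i, ⟨A, hA⟩)) (w := (j, ⟨B, hB⟩))
    rw [hfG i A hA, hfG j B hB] at h2
    constructor
    · intro hd
      exact (h2.mpr ⟨hij, hd⟩).2
    · intro hd
      exact (h2.mp ⟨hij, hd⟩).2
  set i0 : Fin r := ⟨0, by omega⟩ with hi0
  set i1 : Fin r := ⟨1, by omega⟩ with hi1
  have hne01 : i0 ≠ i1 := by
    rw [hi0, hi1]
    exact Fin.ne_of_val_ne (by norm_num)
  have exσ : ∀ i : Fin r, ∃ σ : Equiv.Perm Ω,
      ∀ (A : Finset Ω), A.card = k → G i A = A.image σ := by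
    intro i
    set j := if i = i0 then i1 else i0 with hj
    have hij : i ≠ j := by
      by_cases h : i = i0
      · rw [hj, if_pos h, h]; exact hne01
      · rw [hj, if_neg h]; exact h
    have gp : GoodPair k (G i) (H i) :=
      { gcard := hGcard i
        hcard := hHcard i
        hg := hHG i
        gh := hGH i
        h3 := fun A B C hA hB hC =>
          h3_of_cross hk hN (hGcard i) (hGcard j) (hHcard j) (hHG j) (hGH j)
            (key i j hij) A B C hA hB hC }
    exact main_lemma k hk hN (G i) (H i) gp
  choose σs hσs using exσ
  have hagree : ∀ (i : Fin r) (A : Finset Ω), A.card = k →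
      A.image (σs i0) = A.image (σs i) := by
    intro i A hA
    by_cases h : i = i0
    · rw [h]
    · refine agree_lemma hk hN (σs i0) (σs i) ?_ A hA
      intro A' B' hA' hB'
      rw [← hσs i0 A' hA', ← hσs i B' hB']
      exact key i0 i (fun hE => h hE.symm) A' B' hA' hB'
  refine ⟨σs i0, ?_, ?_⟩
  · intro v
    obtain ⟨i, A, hA⟩ := v
    show ((f (i, ⟨A, hA⟩)).2 : Finset Ω) = A.image (σs i0)
    rw [← hGdef i A hA, hσs i A hA, hagree i A hA]
  · intro σ' hσ'
    apply perm_ext hk hN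
    intro A hA
    have h1 := hσ' (i0, ⟨A, hA⟩)
    rw [← hGdef i0 A hA, hσs i0 A hA] at h1
    exact h1.symm
end

section
/- Let $n, k, r$ be positive integers with $n \geq 2k+1$ and $r \geq 2$, and let $\Omega$ be a finite set with $|\Omega| = n + k(r-2)$. Every automorphism $f$ of the incidence graph of $\Gamma(KG(n,k),r)$ is of the form $f(i, A) = (\pi(i), \sigma(A))$ for a unique permutation $\pi$ of $\{1, \ldots, r\}$ and a unique permutation $\sigma$ of $\Omega$; conversely every such pair $(\pi, \sigma)$ induces an automorphism. Hence the full automorphism group of the incidence graph is isomorphic to $S_\Omega \times S_r$. -/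
set_option linter.unusedSectionVars false
set_option linter.unusedVariables false
set_option maxHeartbeats 1000000
open Finset
section JohnsonAux

lemma my_choose_lt_choose {k a b : ℕ} (hk : 0 < k) (ha : k ≤ a) (hab : a < b) :
    Nat.choose a k < Nat.choose b k := by
  obtain ⟨j, rfl⟩ : ∃ j, k = j + 1 := ⟨k - 1, by omega⟩
  induction b with
  | zero => omega
  | succ b ih =>
    have hb : (b+1).choose (j+1) = b.choose j + b.choose (j+1) := Nat.choose_succ_succ' b j
    rcases Nat.lt_or_ge a b with h | h
    · have := ih h
      omega
    · have : a = b := by omega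
      subst this
      have : 0 < Nat.choose a j := Nat.choose_pos (by omega)
      omega

variable {Ω : Type*} [Fintype Ω] [DecidableEq Ω]

lemma exists_ksubset_avoid (k : ℕ) (S : Finset Ω) (h : S.card + k ≤ Fintype.card Ω) :
    ∃ C : Finset Ω, C.card = k ∧ Disjoint C S := by
  obtain ⟨C, hCsub, hCcard⟩ := Finset.exists_subset_card_eq
    (show k ≤ Sᶜ.card by rw [Finset.card_compl]; omega)
  exact ⟨C, hCcard, (le_compl_iff_disjoint_right).1 hCsub⟩

lemma eq_of_disjoint_class {k : ℕ} (hk : 0 < k) (hm : 2*k ≤ Fintype.card Ω)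
    {A B : Finset Ω} (hA : A.card = k) (hB : B.card = k)
    (h : ∀ C : Finset Ω, C.card = k → (Disjoint C A ↔ Disjoint C B)) : A = B := by
  by_contra hne
  have hAB : (A \ B).Nonempty := by
    rw [Finset.sdiff_nonempty]
    intro hsub
    exact hne (Finset.eq_of_subset_of_card_le hsub (by omega))
  obtain ⟨x, hx⟩ := hAB
  rw [Finset.mem_sdiff] at hx
  have hcompl : k - 1 ≤ (Bᶜ.erase x).card := by
    rw [Finset.card_erase_of_mem (Finset.mem_compl.2 hx.2), Finset.card_compl, hB]
    omega
  obtain ⟨C0, hC0sub, hC0card⟩ := Finset.exists_subset_card_eq hcompl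
  set C := insert x C0 with hC
  have hxC0 : x ∉ C0 := fun hc => (Finset.mem_erase.1 (hC0sub hc)).1 rfl
  have hCcard : C.card = k := by rw [hC, Finset.card_insert_of_notMem hxC0]; omega
  have hCB : Disjoint C B := by
    rw [hC, Finset.disjoint_insert_left]
    refine ⟨hx.2, Finset.disjoint_left.2 fun y hy hyB => ?_⟩
    exact (Finset.mem_compl.1 (Finset.mem_erase.1 (hC0sub hy)).2) hyB
  have := (h C hCcard).2 hCB
  exact (Finset.disjoint_left.1 this (Finset.mem_insert_self x C0)) hx.1

lemma perm_eq_of_image_eq {k : ℕ} (hk : 0 < k) (hm : k + 1 ≤ Fintype.card Ω)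
    {σ τ : Equiv.Perm Ω}
    (h : ∀ A : Finset Ω, A.card = k → A.image σ = A.image τ) : σ = τ := by
  ext x
  by_contra hne
  set z := τ.symm (σ x) with hz
  have hzx : z ≠ x := fun hc => hne (by rw [show σ x = τ z from by simp [hz], hc])
  have hcompl : k - 1 ≤ (({x,z} : Finset Ω)ᶜ).card := by
    rw [Finset.card_compl, Finset.card_insert_of_notMem (by simpa using hzx.symm),
      Finset.card_singleton]
    omega
  obtain ⟨C0, hC0sub, hC0card⟩ := Finset.exists_subset_card_eq hcompl
  set A := insert x C0 with hA
  have hxC0 : x ∉ C0 := fun hc => by simpa using (Finset.mem_compl.1 (hC0sub hc)) (by simp)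
  have hAcard : A.card = k := by rw [hA, Finset.card_insert_of_notMem hxC0]; omega
  have hσx : σ x ∈ A.image τ := by
    rw [← h A hAcard]; exact Finset.mem_image_of_mem _ (Finset.mem_insert_self x C0)
  obtain ⟨y, hyA, hyx⟩ := Finset.mem_image.1 hσx
  have : y = z := by rw [hz, ← hyx]; simp
  subst this
  rcases Finset.mem_insert.1 hyA with h1 | h1
  · exact hzx h1
  · exact (Finset.mem_compl.1 (hC0sub h1)) (by simp)


/-- J1: triangle lemma in the Johnson graph -/
lemma johnson_triangle {k : ℕ} {A B D : Finset Ω} (hA : A.card = k) (hB : B.card = k)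
    (hD : D.card = k) (hAB : (A ∩ B).card = k - 1) (hAD : (A ∩ D).card = k - 1)
    (hBD : (B ∩ D).card = k - 1) (hk : 0 < k) :
    A ∩ B ⊆ D ∨ D ⊆ A ∪ B := by
  by_cases hsub : A ∩ B ⊆ D
  · exact Or.inl hsub
  right
  have h1 : (A ∩ B ∩ D).card < k - 1 := by
    have hss : A ∩ B ∩ D ⊂ A ∩ B := by
      refine Finset.ssubset_iff_subset_ne.2 ⟨Finset.inter_subset_left, fun hc => hsub ?_⟩
      rw [← hc]; exact Finset.inter_subset_right
    have := Finset.card_lt_card hss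
    omega
  have hIE : (D ∩ A) ∩ (D ∩ B) = A ∩ B ∩ D := by
    ext y; simp [Finset.mem_inter]; tauto
  have hUE : (D ∩ A) ∪ (D ∩ B) = D ∩ (A ∪ B) := by
    ext y; simp [Finset.mem_inter, Finset.mem_union]; tauto
  have hcard := Finset.card_union_add_card_inter (D ∩ A) (D ∩ B)
  rw [hIE, hUE] at hcard
  rw [Finset.inter_comm D A] at hcard
  rw [Finset.inter_comm D B] at hcard
  have hle : (D ∩ (A ∪ B)).card ≤ D.card := Finset.card_le_card Finset.inter_subset_left
  have : (D ∩ (A ∪ B)).card = k := by omega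
  have heq : D ∩ (A ∪ B) = D :=
    Finset.eq_of_subset_of_card_le Finset.inter_subset_left (by omega)
  rw [← heq]
  exact Finset.inter_subset_right

/-- J2: a large Johnson clique is a star -/
lemma johnson_clique_star {k : ℕ} (hk : 0 < k) {F : Finset (Finset Ω)}
    (hcard : ∀ A ∈ F, A.card = k)
    (hadj : ∀ A ∈ F, ∀ B ∈ F, A ≠ B → (A ∩ B).card = k - 1)
    (hF : k + 2 ≤ F.card) :
    ∃ S : Finset Ω, S.card = k - 1 ∧ ∀ A ∈ F, S ⊆ A := by
  obtain ⟨A, hAF, B, hBF, hABne⟩ := Finset.one_lt_card.1 (by omega : 1 < F.card)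
  by_cases hstar : ∀ D ∈ F, A ∩ B ⊆ D
  · exact ⟨A ∩ B, hadj A hAF B hBF hABne, hstar⟩
  push_neg at hstar
  obtain ⟨D, hDF, hDnsub⟩ := hstar
  have hDA : D ≠ A := fun hc => hDnsub (hc ▸ Finset.inter_subset_left)
  have hDB : D ≠ B := fun hc => hDnsub (hc ▸ Finset.inter_subset_right)
  have hDsub : D ⊆ A ∪ B := by
    rcases johnson_triangle (hcard A hAF) (hcard B hBF) (hcard D hDF)
      (hadj A hAF B hBF hABne) (hadj A hAF D hDF (Ne.symm hDA)) (hadj B hBF D hDF (Ne.symm hDB)) hk with h | h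
    · exact absurd h hDnsub
    · exact h
  have hABcard : (A ∪ B).card = k + 1 := by
    have := Finset.card_union_add_card_inter A B
    rw [hcard A hAF, hcard B hBF, hadj A hAF B hBF hABne] at this
    omega
  have hADcard : (A ∪ D).card = k + 1 := by
    have := Finset.card_union_add_card_inter A D
    rw [hcard A hAF, hcard D hDF, hadj A hAF D hDF (Ne.symm hDA)] at this
    omega
  have hADeq : A ∪ D = A ∪ B := by
    apply Finset.eq_of_subset_of_card_le
    · exact Finset.union_subset Finset.subset_union_left hDsub
    · omega
  have hInter_ne : A ∩ D ≠ A ∩ B := by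
    intro hc
    exact hDnsub (hc ▸ Finset.inter_subset_right)
  -- every member of F lies in A ∪ B
  have hall : ∀ E ∈ F, E ⊆ A ∪ B := by
    intro E hEF
    by_cases hEA : E = A; · exact hEA ▸ Finset.subset_union_left
    by_cases hEB : E = B; · exact hEB ▸ Finset.subset_union_right
    by_cases hED : E = D; · exact hED ▸ hDsub
    rcases johnson_triangle (hcard A hAF) (hcard B hBF) (hcard E hEF)
      (hadj A hAF B hBF hABne) (hadj A hAF E hEF (Ne.symm hEA)) (hadj B hBF E hEF (Ne.symm hEB)) hk with h1 | h1
    swap; · exact h1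
    rcases johnson_triangle (hcard A hAF) (hcard D hDF) (hcard E hEF)
      (hadj A hAF D hDF (Ne.symm hDA)) (hadj A hAF E hEF (Ne.symm hEA)) (hadj D hDF E hEF (Ne.symm hED)) hk with h2 | h2
    swap; · exact hADeq ▸ h2
    -- both A∩B ⊆ E and A∩D ⊆ E: forces A ⊆ E, contradiction
    exfalso
    have hsubA : (A ∩ B) ∪ (A ∩ D) ⊆ A :=
      Finset.union_subset Finset.inter_subset_left Finset.inter_subset_left
    have hcardU : k ≤ ((A ∩ B) ∪ (A ∩ D)).card := by
      obtain ⟨y, hy⟩ : ((A ∩ D) \ (A ∩ B)).Nonempty := by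
        rw [Finset.sdiff_nonempty]
        intro hc
        exact hInter_ne (Finset.eq_of_subset_of_card_le hc
          (by rw [hadj A hAF B hBF hABne, hadj A hAF D hDF (Ne.symm hDA)]))
      have : insert y (A ∩ B) ⊆ (A ∩ B) ∪ (A ∩ D) := by
        rw [Finset.insert_subset_iff]
        exact ⟨Finset.mem_union_right _ (Finset.mem_sdiff.1 hy).1, Finset.subset_union_left⟩
      have hcl := Finset.card_le_card this
      rw [Finset.card_insert_of_notMem (Finset.mem_sdiff.1 hy).2,
        hadj A hAF B hBF hABne] at hcl
      omega
    have hAE : A ⊆ E := by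
      have : (A ∩ B) ∪ (A ∩ D) = A :=
        Finset.eq_of_subset_of_card_le hsubA (by rw [hcard A hAF]; exact hcardU)
      rw [← this]
      exact Finset.union_subset h1 h2
    exact hEA (Finset.eq_of_subset_of_card_le hAE
      (by rw [hcard E hEF, hcard A hAF])).symm
  -- but then F is too small
  exfalso
  have hFsub : F ⊆ (A ∪ B).powersetCard k := by
    intro E hEF
    rw [Finset.mem_powersetCard]
    exact ⟨hall E hEF, hcard E hEF⟩
  have := Finset.card_le_card hFsub
  rw [Finset.card_powersetCard, hABcard, Nat.choose_succ_self_right] at this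
  omega

/-- the star of k-sets through S -/
def jstar (k : ℕ) (S : Finset Ω) : Finset (Finset Ω) :=
  (Finset.univ.powersetCard k).filter (fun A => S ⊆ A)

lemma mem_jstar {k : ℕ} {S A : Finset Ω} : A ∈ jstar k S ↔ A.card = k ∧ S ⊆ A := by
  simp [jstar, Finset.mem_powersetCard, and_comm]

lemma card_jstar {k : ℕ} (hk : 0 < k) (hm : k ≤ Fintype.card Ω)
    {S : Finset Ω} (hS : S.card = k - 1) :
    (jstar k S).card = Fintype.card Ω - k + 1 := by
  have : Sᶜ.card = (jstar k S).card := by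
    apply Finset.card_bij (fun a _ => insert a S)
    · intro a ha
      rw [mem_jstar]
      exact ⟨by rw [Finset.card_insert_of_notMem (by simpa using ha)]; omega,
        Finset.subset_insert a S⟩
    · intro a ha b hb hab
      by_contra hne
      have : a ∈ insert b S := hab ▸ Finset.mem_insert_self a S
      rcases Finset.mem_insert.1 this with h | h
      · exact hne h
      · exact (Finset.mem_compl.1 ha) h
    · intro A hA
      rw [mem_jstar] at hA
      obtain ⟨x, hx⟩ : (A \ S).Nonempty := by
        rw [← Finset.card_pos, Finset.card_sdiff_of_subset hA.2, hA.1, hS]; omega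
      rw [Finset.mem_sdiff] at hx
      refine ⟨x, Finset.mem_compl.2 hx.2, ?_⟩
      apply Finset.eq_of_subset_of_card_le
      · rw [Finset.insert_subset_iff]; exact ⟨hx.1, hA.2⟩
      · rw [hA.1, Finset.card_insert_of_notMem hx.2]; omega
  rw [← this, Finset.card_compl, hS]
  omega

lemma jstar_inj {k : ℕ} (hk : 0 < k) (hm : k + 1 ≤ Fintype.card Ω)
    {S T : Finset Ω} (hS : S.card = k - 1) (hT : T.card = k - 1)
    (h : jstar k S = jstar k T) : S = T := by
  have key : ∀ S T : Finset Ω, S.card = k - 1 → T.card = k - 1 →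
      jstar k S = jstar k T → T ⊆ S := by
    intro S T hS hT h x hxT
    by_contra hxS
    obtain ⟨A, hAcard, hAdisj⟩ := exists_ksubset_avoid (k - (k-1)) (insert x S)
      (by rw [Finset.card_insert_of_notMem (fun hc => hxS hc), hS]; omega)
    rw [Finset.disjoint_insert_right] at hAdisj
    have hU : (A ∪ S) ∈ jstar k S := by
      rw [mem_jstar]
      constructor
      · rw [Finset.card_union_of_disjoint hAdisj.2, hAcard, hS]; omega
      · exact Finset.subset_union_right
    rw [h, mem_jstar] at hU
    have : x ∈ A ∪ S := hU.2 hxT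
    rcases Finset.mem_union.1 this with h1 | h1
    · exact hAdisj.1 h1
    · exact hxS h1
  exact Finset.Subset.antisymm (key T S hT hS h.symm) (key S T hS hT h)

lemma succ_card_le_card_union {X Y : Finset Ω} (hne : X ≠ Y) (hcard : X.card = Y.card) :
    X.card + 1 ≤ (X ∪ Y).card := by
  obtain ⟨y, hy⟩ : (Y \ X).Nonempty := by
    rw [Finset.sdiff_nonempty]
    intro hc
    exact hne (Finset.eq_of_subset_of_card_le hc (by omega)).symm
  rw [Finset.mem_sdiff] at hy
  calc X.card + 1 = (insert y X).card := (Finset.card_insert_of_notMem hy.2).symm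
    _ ≤ (X ∪ Y).card := Finset.card_le_card (by
        rw [Finset.insert_subset_iff]
        exact ⟨Finset.mem_union_right _ hy.1, Finset.subset_union_left⟩)

/-- the Johnson graph theorem: an injective map on k-sets preserving
Johnson adjacency is induced by a permutation of the ground set. -/
lemma johnson_perm : ∀ (k : ℕ), 0 < k → 2*k+1 ≤ Fintype.card Ω →
    ∀ (ψ : Finset Ω → Finset Ω),
    (∀ A, A.card = k → (ψ A).card = k) →
    (∀ A B, A.card = k → B.card = k → ψ A = ψ B → A = B) →
    (∀ A B, A.card = k → B.card = k → (A ∩ B).card = k - 1 → (ψ A ∩ ψ B).card = k - 1) →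
    ∃ σ : Equiv.Perm Ω, ∀ A, A.card = k → ψ A = A.image σ := by
  intro k
  induction k with
  | zero => omega
  | succ j ih =>
    intro _ hm ψ hcard hinj hadj
    rcases Nat.eq_zero_or_pos j with hj | hj
    · -- base case k = 1
      subst hj
      have hsing : ∀ x : Ω, ∃ y, ψ {x} = {y} := fun x =>
        Finset.card_eq_one.1 (hcard {x} (Finset.card_singleton x))
      choose g hg using hsing
      have hginj : Function.Injective g := by
        intro x y hxy
        have : ψ {x} = ψ {y} := by rw [hg x, hg y, hxy]
        have := hinj {x} {y} (Finset.card_singleton x) (Finset.card_singleton y) this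
        exact Finset.singleton_injective this
      refine ⟨Equiv.ofBijective g ((Finite.injective_iff_bijective).1 hginj), ?_⟩
      intro A hA
      obtain ⟨x, rfl⟩ := Finset.card_eq_one.1 hA
      rw [Finset.image_singleton, hg x]
      rfl
    · -- inductive step, k = j + 1 with j ≥ 1
      -- star images are stars
      have hstar : ∀ S : Finset Ω, S.card = j →
          ∃ S', S'.card = j ∧ (jstar (j+1) S).image ψ = jstar (j+1) S' := by
        intro S hS
        have hpairwise : ∀ A ∈ jstar (j+1) S, ∀ B ∈ jstar (j+1) S, A ≠ B →
            (A ∩ B).card = j := by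
          intro A hA B hB hne
          rw [mem_jstar] at hA hB
          have h1 : S ⊆ A ∩ B := Finset.subset_inter hA.2 hB.2
          have h2 : A ∩ B ⊆ A := Finset.inter_subset_left
          have hlt : (A ∩ B).card < j + 1 := by
            by_contra hc
            have heq : A ∩ B = A := Finset.eq_of_subset_of_card_le h2 (by omega)
            have hAB : A ⊆ B := by rw [← heq]; exact Finset.inter_subset_right
            exact hne (Finset.eq_of_subset_of_card_le hAB (by omega))
          have := Finset.card_le_card h1
          omega
        have hstarinj : Set.InjOn ψ ↑(jstar (j+1) S) := by
          intro A hA B hB hAB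
          rw [Finset.mem_coe, mem_jstar] at hA hB
          exact hinj A B hA.1 hB.1 hAB
        have hFcard : ((jstar (j+1) S).image ψ).card = Fintype.card Ω - j := by
          rw [Finset.card_image_of_injOn hstarinj,
            card_jstar (by omega) (by omega) (by simpa using hS)]
          omega
        have hFk : ∀ A ∈ (jstar (j+1) S).image ψ, A.card = j + 1 := by
          intro A hA
          obtain ⟨B, hB, rfl⟩ := Finset.mem_image.1 hA
          exact hcard B (mem_jstar.1 hB).1
        have hFadj : ∀ A ∈ (jstar (j+1) S).image ψ, ∀ B ∈ (jstar (j+1) S).image ψ,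
            A ≠ B → (A ∩ B).card = j + 1 - 1 := by
          intro A hA B hB hne
          obtain ⟨A0, hA0, rfl⟩ := Finset.mem_image.1 hA
          obtain ⟨B0, hB0, rfl⟩ := Finset.mem_image.1 hB
          have hne0 : A0 ≠ B0 := fun hc => hne (by rw [hc])
          have := hadj A0 B0 (mem_jstar.1 hA0).1 (mem_jstar.1 hB0).1
            (by simpa using hpairwise A0 hA0 B0 hB0 hne0)
          simpa using this
        obtain ⟨S', hS'card, hS'sub⟩ := johnson_clique_star (k := j+1) (by omega)
          hFk hFadj (by omega)
        refine ⟨S', by simpa using hS'card, ?_⟩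
        apply Finset.eq_of_subset_of_card_le
        · intro A hA
          rw [mem_jstar]
          exact ⟨hFk A hA, hS'sub A hA⟩
        · rw [card_jstar (by omega) (by omega) (by simpa using hS'card), hFcard]
          omega
      choose S' hS'card hS'star using hstar
      set ψ' : Finset Ω → Finset Ω := fun S => if h : S.card = j then S' S h else ∅ with hψ'def
      have hψ'star : ∀ (S : Finset Ω) (h : S.card = j),
          (jstar (j+1) S).image ψ = jstar (j+1) (ψ' S) := by
        intro S h
        rw [hψ'def]
        simp only [dif_pos h]
        exact hS'star S h
      have hψ'card : ∀ S : Finset Ω, S.card = j → (ψ' S).card = j := by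
        intro S h
        rw [hψ'def]
        simp only [dif_pos h]
        exact hS'card S h
      have hstar_eq : ∀ S T : Finset Ω, S.card = j → T.card = j →
          (jstar (j+1) S).image ψ = (jstar (j+1) T).image ψ → S = T := by
        intro S T hS hT h
        have h2 : jstar (j+1) S = jstar (j+1) T := by
          ext A
          constructor <;> intro hA
          · have : ψ A ∈ (jstar (j+1) T).image ψ := h ▸ Finset.mem_image_of_mem ψ hA
            obtain ⟨B, hB, hBA⟩ := Finset.mem_image.1 this
            rwa [← hinj B A (mem_jstar.1 hB).1 (mem_jstar.1 hA).1 hBA]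
          · have : ψ A ∈ (jstar (j+1) S).image ψ := h.symm ▸ Finset.mem_image_of_mem ψ hA
            obtain ⟨B, hB, hBA⟩ := Finset.mem_image.1 this
            rwa [← hinj B A (mem_jstar.1 hB).1 (mem_jstar.1 hA).1 hBA]
        exact jstar_inj (by omega) (by omega) (by simpa using hS) (by simpa using hT) h2
      have hψ'inj : ∀ S T : Finset Ω, S.card = j → T.card = j → ψ' S = ψ' T → S = T := by
        intro S T hS hT heq
        exact hstar_eq S T hS hT (by rw [hψ'star S hS, hψ'star T hT, heq])
      have hψ'adj : ∀ S T : Finset Ω, S.card = j → T.card = j →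
          (S ∩ T).card = j - 1 → (ψ' S ∩ ψ' T).card = j - 1 := by
        intro S T hS hT hST
        have hSTne : S ≠ T := by
          intro hc
          rw [hc, Finset.inter_self, hT] at hST
          omega
        have hU : (S ∪ T).card = j + 1 := by
          have := Finset.card_union_add_card_inter S T
          omega
        have hUS : S ∪ T ∈ jstar (j+1) S := mem_jstar.2 ⟨hU, Finset.subset_union_left⟩
        have hUT : S ∪ T ∈ jstar (j+1) T := mem_jstar.2 ⟨hU, Finset.subset_union_right⟩
        have hψUS : ψ' S ⊆ ψ (S ∪ T) := by
          have : ψ (S ∪ T) ∈ jstar (j+1) (ψ' S) :=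
            hψ'star S hS ▸ Finset.mem_image_of_mem ψ hUS
          exact (mem_jstar.1 this).2
        have hψUT : ψ' T ⊆ ψ (S ∪ T) := by
          have : ψ (S ∪ T) ∈ jstar (j+1) (ψ' T) :=
            hψ'star T hT ▸ Finset.mem_image_of_mem ψ hUT
          exact (mem_jstar.1 this).2
        have hne' : ψ' S ≠ ψ' T := fun hc => hSTne (hψ'inj S T hS hT hc)
        have hUcard : (ψ' S ∪ ψ' T).card = j + 1 := by
          have h1 := succ_card_le_card_union hne' (by rw [hψ'card S hS, hψ'card T hT])
          have h2 : (ψ' S ∪ ψ' T).card ≤ j + 1 := by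
            have := Finset.card_le_card (Finset.union_subset hψUS hψUT)
            rwa [hcard (S ∪ T) hU] at this
          rw [hψ'card S hS] at h1
          omega
        have := Finset.card_union_add_card_inter (ψ' S) (ψ' T)
        rw [hUcard, hψ'card S hS, hψ'card T hT] at this
        omega
      obtain ⟨σ, hσ⟩ := ih hj (by omega) ψ' hψ'card hψ'inj hψ'adj
      refine ⟨σ, ?_⟩
      intro A hA
      have himg : A.image σ ⊆ ψ A := by
        intro z hz
        obtain ⟨x, hxA, rfl⟩ := Finset.mem_image.1 hz
        obtain ⟨y, hyA, hyx⟩ := Finset.exists_mem_ne (s := A) (by omega) x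
        have hScard : (A.erase y).card = j := by
          rw [Finset.card_erase_of_mem hyA, hA]
          omega
        have hAstar : A ∈ jstar (j+1) (A.erase y) :=
          mem_jstar.2 ⟨hA, Finset.erase_subset y A⟩
        have : ψ A ∈ jstar (j+1) (ψ' (A.erase y)) :=
          hψ'star (A.erase y) hScard ▸ Finset.mem_image_of_mem ψ hAstar
        have hsub : ψ' (A.erase y) ⊆ ψ A := (mem_jstar.1 this).2
        rw [hσ (A.erase y) hScard] at hsub
        exact hsub (Finset.mem_image_of_mem σ (Finset.mem_erase.2 ⟨hyx.symm, hxA⟩))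
      exact (Finset.eq_of_subset_of_card_le himg
        (by rw [hcard A hA, Finset.card_image_of_injective A σ.injective, hA])).symm

lemma cnt_filter_eq {k : ℕ} (X Y : Finset Ω) :
    ((Finset.univ.powersetCard k).filter (fun A => Disjoint A X ∧ Disjoint A Y)).card
      = Nat.choose (Fintype.card Ω - (X ∪ Y).card) k := by
  have : (Finset.univ.powersetCard k).filter (fun A => Disjoint A X ∧ Disjoint A Y)
      = (X ∪ Y)ᶜ.powersetCard k := by
    ext A
    rw [Finset.mem_filter, Finset.mem_powersetCard, Finset.mem_powersetCard]
    constructor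
    · rintro ⟨⟨-, hcard⟩, h1, h2⟩
      exact ⟨le_compl_iff_disjoint_right.2 (Finset.disjoint_union_right.2 ⟨h1, h2⟩), hcard⟩
    · rintro ⟨hsub, hcard⟩
      have := Finset.disjoint_union_right.1 (le_compl_iff_disjoint_right.1 hsub)
      exact ⟨⟨Finset.subset_univ A, hcard⟩, this.1, this.2⟩
  rw [this, Finset.card_powersetCard, Finset.card_compl]

lemma cross_pair {k : ℕ} (hk : 0 < k) (hm : 2*k+1 ≤ Fintype.card Ω)
    (φ ψ : Finset Ω → Finset Ω)
    (hφcard : ∀ A, A.card = k → (φ A).card = k)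
    (hψcard : ∀ B, B.card = k → (ψ B).card = k)
    (hφsurj : ∀ C, C.card = k → ∃ A, A.card = k ∧ φ A = C)
    (hcross : ∀ A B, A.card = k → B.card = k → (Disjoint A B ↔ Disjoint (φ A) (ψ B))) :
    (∀ B B', B.card = k → B'.card = k → ψ B = ψ B' → B = B') ∧
    (∀ B B', B.card = k → B'.card = k → (B ∩ B').card = k - 1 →
      (ψ B ∩ ψ B').card = k - 1) := by
  have hψinj : ∀ B B', B.card = k → B'.card = k → ψ B = ψ B' → B = B' := by
    intro B B' hB hB' heq
    refine eq_of_disjoint_class hk (by omega) hB hB' (fun C hC => ?_)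
    rw [hcross C B hC hB, hcross C B' hC hB', heq]
  refine ⟨hψinj, ?_⟩
  have hφinj : ∀ A A', A.card = k → A'.card = k → φ A = φ A' → A = A' := by
    intro A A' hA hA' heq
    refine eq_of_disjoint_class hk (by omega) hA hA' (fun C hC => ?_)
    rw [disjoint_comm, hcross A C hA hC, heq, ← hcross A' C hA' hC, disjoint_comm]
  intro B B' hB hB' hBB'
  have hne : B ≠ B' := by
    intro hc
    rw [hc, Finset.inter_self, hB'] at hBB'
    omega
  have hcnt : ((Finset.univ.powersetCard k).filter
        (fun A => Disjoint A B ∧ Disjoint A B')).card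
      = ((Finset.univ.powersetCard k).filter
        (fun A => Disjoint A (ψ B) ∧ Disjoint A (ψ B'))).card := by
    apply Finset.card_bij (fun A _ => φ A)
    · intro A hA
      rw [Finset.mem_filter, Finset.mem_powersetCard] at hA ⊢
      refine ⟨⟨Finset.subset_univ _, hφcard A hA.1.2⟩, ?_, ?_⟩
      · exact (hcross A B hA.1.2 hB).1 hA.2.1
      · exact (hcross A B' hA.1.2 hB').1 hA.2.2
    · intro A hA A' hA' heq
      rw [Finset.mem_filter, Finset.mem_powersetCard] at hA hA'
      exact hφinj A A' hA.1.2 hA'.1.2 heq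
    · intro C hC
      rw [Finset.mem_filter, Finset.mem_powersetCard] at hC
      obtain ⟨A, hAcard, rfl⟩ := hφsurj C hC.1.2
      refine ⟨A, ?_, rfl⟩
      rw [Finset.mem_filter, Finset.mem_powersetCard]
      exact ⟨⟨Finset.subset_univ _, hAcard⟩,
        (hcross A B hAcard hB).2 hC.2.1, (hcross A B' hAcard hB').2 hC.2.2⟩
  rw [cnt_filter_eq, cnt_filter_eq] at hcnt
  have hU : (B ∪ B').card = k + 1 := by
    have := Finset.card_union_add_card_inter B B'
    omega
  have hU'lb : k + 1 ≤ (ψ B ∪ ψ B').card := by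
    have := succ_card_le_card_union (X := ψ B) (Y := ψ B')
      (fun hc => hne (hψinj B B' hB hB' hc)) (by rw [hψcard B hB, hψcard B' hB'])
    rwa [hψcard B hB] at this
  have hU'ub : (ψ B ∪ ψ B').card ≤ 2 * k := by
    have := Finset.card_union_le (ψ B) (ψ B')
    rw [hψcard B hB, hψcard B' hB'] at this
    omega
  have hU' : (ψ B ∪ ψ B').card = k + 1 := by
    by_contra hc
    have hgt : k + 1 < (ψ B ∪ ψ B').card := by omega
    rw [hU] at hcnt
    rcases Nat.lt_or_ge (Fintype.card Ω - (ψ B ∪ ψ B').card) k with h | h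
    · rw [Nat.choose_eq_zero_of_lt h] at hcnt
      have := Nat.choose_pos (show k ≤ Fintype.card Ω - (k+1) by omega)
      omega
    · have := my_choose_lt_choose hk h
        (show Fintype.card Ω - (ψ B ∪ ψ B').card < Fintype.card Ω - (k+1) by omega)
      omega
  have := Finset.card_union_add_card_inter (ψ B) (ψ B')
  rw [hU', hψcard B hB, hψcard B' hB'] at this
  omega

lemma exists_disjoint_family (k : ℕ) : ∀ (t : ℕ) (W : Finset Ω), t * k ≤ W.card →
    ∃ c : Fin t → Finset Ω, (∀ l, (c l).card = k ∧ c l ⊆ W) ∧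
      ∀ l l', l ≠ l' → Disjoint (c l) (c l') := by
  intro t
  induction t with
  | zero => exact fun W _ => ⟨Fin.elim0, fun l => l.elim0, fun l => l.elim0⟩
  | succ t ih =>
    intro W hW
    have hW' : t * k + k ≤ W.card := by rwa [add_mul, one_mul] at hW
    obtain ⟨C, hCsub, hCcard⟩ := Finset.exists_subset_card_eq
      (show k ≤ W.card by omega)
    obtain ⟨c', hc'1, hc'2⟩ := ih (W \ C)
      (by rw [Finset.card_sdiff_of_subset hCsub, hCcard]; omega)
    refine ⟨Fin.cons C c', ?_, ?_⟩
    · intro l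
      refine Fin.cases ?_ ?_ l
      · simpa using ⟨hCcard, hCsub⟩
      · intro p
        simp only [Fin.cons_succ]
        exact ⟨(hc'1 p).1, (hc'1 p).2.trans (Finset.sdiff_subset)⟩
    · intro l l' hne
      induction l using Fin.cases with
      | zero =>
        induction l' using Fin.cases with
        | zero => exact absurd rfl hne
        | succ q =>
          simp only [Fin.cons_zero, Fin.cons_succ]
          exact (Finset.sdiff_disjoint.mono_left (hc'1 q).2).symm
      | succ p =>
        induction l' using Fin.cases with
        | zero =>
          simp only [Fin.cons_zero, Fin.cons_succ]
          exact Finset.sdiff_disjoint.mono_left (hc'1 p).2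
        | succ q =>
          simp only [Fin.cons_succ]
          exact hc'2 p q (fun h => hne (congrArg Fin.succ h))

end JohnsonAux
section graph
variable {Ω : Type*} [Fintype Ω] [DecidableEq Ω] {r k : ℕ}

lemma type_eq_of_clique {u v : Fin r × {A : Finset Ω // A.card = k}}
    (s : Finset (Fin r × {A : Finset Ω // A.card = k})) (hcard : s.card = r - 1)
    (hu : ∀ w ∈ s, (incidenceGraph r k Ω).Adj u w)
    (hv : ∀ w ∈ s, (incidenceGraph r k Ω).Adj v w)
    (hpair : ∀ w ∈ s, ∀ w' ∈ s, w ≠ w' → (incidenceGraph r k Ω).Adj w w') :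
    u.1 = v.1 := by
  set T := s.image Prod.fst with hT
  have hTcard : T.card = r - 1 := by
    rw [hT, Finset.card_image_of_injOn, hcard]
    intro w hw w' hw' heq
    by_contra hne
    exact (hpair w hw w' hw' hne).1 heq
  have huT : u.1 ∉ T := by
    rw [hT]
    simp only [Finset.mem_image, not_exists]
    rintro w ⟨hw, hw1⟩
    exact (hu w hw).1 hw1.symm
  have hvT : v.1 ∉ T := by
    rw [hT]
    simp only [Finset.mem_image, not_exists]
    rintro w ⟨hw, hw1⟩
    exact (hv w hw).1 hw1.symm
  have hr1 : 1 ≤ r := u.1.pos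
  have hTc : Tᶜ.card = 1 := by
    rw [Finset.card_compl, hTcard]
    simp only [Fintype.card_fin]
    omega
  have := Finset.card_le_one.1 (le_of_eq hTc) u.1 (Finset.mem_compl.2 huT)
    v.1 (Finset.mem_compl.2 hvT)
  exact this

lemma clique_exists (hk : 0 < k) (hr : 2 ≤ r) (hm : k * r + 1 ≤ Fintype.card Ω)
    {i : Fin r} {A B : Finset Ω} (hA : A.card = k) (hB : B.card = k)
    (hUB : (A ∪ B).card ≤ k + 1) :
    ∃ s : Finset (Fin r × {C : Finset Ω // C.card = k}), s.card = r - 1 ∧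
      (∀ w ∈ s, (incidenceGraph r k Ω).Adj (i, ⟨A, hA⟩) w) ∧
      (∀ w ∈ s, (incidenceGraph r k Ω).Adj (i, ⟨B, hB⟩) w) ∧
      (∀ w ∈ s, ∀ w' ∈ s, w ≠ w' → (incidenceGraph r k Ω).Adj w w') := by
  have hrk : (r - 1) * k + k = r * k := by
    have h1 : r - 1 + 1 = r := by omega
    calc (r-1)*k + k = ((r-1)+1)*k := by ring
      _ = r * k := by rw [h1]
  have hm' : r * k + 1 ≤ Fintype.card Ω := by rwa [mul_comm] at hm
  obtain ⟨c, hc1, hc2⟩ := exists_disjoint_family k (r-1) ((A ∪ B)ᶜ)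
    (by rw [Finset.card_compl]; omega)
  have hcA : ∀ l, Disjoint A (c l) ∧ Disjoint B (c l) := by
    intro l
    have := Finset.disjoint_union_right.1 (le_compl_iff_disjoint_right.1 (hc1 l).2)
    exact ⟨this.1.symm, this.2.symm⟩
  have hcardU : (Finset.univ.erase i).card = r - 1 := by
    rw [Finset.card_erase_of_mem (Finset.mem_univ i), Finset.card_univ, Fintype.card_fin]
  let e : {x // x ∈ Finset.univ.erase i} ≃ Fin (r-1) :=
    (Finset.univ.erase i).equivFinOfCardEq hcardU
  set s : Finset (Fin r × {C : Finset Ω // C.card = k}) :=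
    (Finset.univ.erase i).attach.image
      (fun j => (j.1, ⟨c (e j), (hc1 (e j)).1⟩)) with hs
  have hmem : ∀ w ∈ s, ∃ j : {x // x ∈ Finset.univ.erase i},
      w = (j.1, ⟨c (e j), (hc1 (e j)).1⟩) := by
    intro w hw
    rw [hs] at hw
    obtain ⟨j, _, rfl⟩ := Finset.mem_image.1 hw
    exact ⟨j, rfl⟩
  refine ⟨s, ?_, ?_, ?_, ?_⟩
  · rw [hs, Finset.card_image_of_injOn, Finset.card_attach, hcardU]
    intro j _ j' _ heq
    exact Subtype.ext (congrArg Prod.fst heq)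
  · intro w hw
    obtain ⟨j, rfl⟩ := hmem w hw
    exact ⟨fun hc => (Finset.mem_erase.1 j.2).1 hc.symm, (hcA (e j)).1⟩
  · intro w hw
    obtain ⟨j, rfl⟩ := hmem w hw
    exact ⟨fun hc => (Finset.mem_erase.1 j.2).1 hc.symm, (hcA (e j)).2⟩
  · intro w hw w' hw' hne
    obtain ⟨j, rfl⟩ := hmem w hw
    obtain ⟨j', rfl⟩ := hmem w' hw'
    have hjj' : j ≠ j' := fun hc => hne (by rw [hc])
    refine ⟨?_, hc2 (e j) (e j') (fun hc => hjj' (e.injective hc))⟩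
    simp only [ne_eq]
    exact fun hc => hjj' (Subtype.ext hc)

end graph

section fiber
variable {Ω : Type*} [Fintype Ω] [DecidableEq Ω] {r k : ℕ}

lemma fiber_step (hk : 0 < k) (hr : 2 ≤ r) (hm : k * r + 1 ≤ Fintype.card Ω)
    (f : incidenceGraph r k Ω ≃g incidenceGraph r k Ω)
    {i : Fin r} {A B : Finset Ω} (hA : A.card = k) (hB : B.card = k)
    (hUB : (A ∪ B).card ≤ k + 1) :
    (f (i, ⟨A, hA⟩)).1 = (f (i, ⟨B, hB⟩)).1 := by
  obtain ⟨s, hscard, hsu, hsv, hsp⟩ := clique_exists hk hr hm hA hB hUB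
  apply type_eq_of_clique (s.image f)
  · rw [Finset.card_image_of_injective s f.injective, hscard]
  · intro w hw
    obtain ⟨w0, hw0, rfl⟩ := Finset.mem_image.1 hw
    exact f.map_adj_iff.2 (hsu w0 hw0)
  · intro w hw
    obtain ⟨w0, hw0, rfl⟩ := Finset.mem_image.1 hw
    exact f.map_adj_iff.2 (hsv w0 hw0)
  · intro w hw w' hw' hne
    obtain ⟨w0, hw0, rfl⟩ := Finset.mem_image.1 hw
    obtain ⟨w0', hw0', rfl⟩ := Finset.mem_image.1 hw'
    exact f.map_adj_iff.2 (hsp w0 hw0 w0' hw0' (fun hc => hne (by rw [hc])))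

lemma fiber_eq (hk : 0 < k) (hr : 2 ≤ r) (hm : k * r + 1 ≤ Fintype.card Ω)
    (f : incidenceGraph r k Ω ≃g incidenceGraph r k Ω) {i : Fin r} :
    ∀ (N : ℕ) {A B : Finset Ω} (hA : A.card = k) (hB : B.card = k),
      (A \ B).card ≤ N → (f (i, ⟨A, hA⟩)).1 = (f (i, ⟨B, hB⟩)).1 := by
  intro N
  induction N with
  | zero =>
    intro A B hA hB hcard
    have : A = B := by
      have h0 : A \ B = ∅ := Finset.card_eq_zero.1 (by omega)
      exact Finset.eq_of_subset_of_card_le (Finset.sdiff_eq_empty_iff_subset.1 h0)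
        (by omega)
    subst this
    rfl
  | succ N ihN =>
    intro A B hA hB hcard
    by_cases hAB : A = B
    · subst hAB; rfl
    have hABne : (A \ B).Nonempty := by
      rw [Finset.sdiff_nonempty]
      intro hc
      exact hAB (Finset.eq_of_subset_of_card_le hc (by omega))
    have hBAne : (B \ A).Nonempty := by
      rw [Finset.sdiff_nonempty]
      intro hc
      exact hAB (Finset.eq_of_subset_of_card_le hc (by omega)).symm
    obtain ⟨a, ha⟩ := hABne
    obtain ⟨b, hb⟩ := hBAne
    rw [Finset.mem_sdiff] at ha hb
    have hbA' : b ∉ A.erase a := fun hc => hb.2 (Finset.mem_of_mem_erase hc)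
    set A' := insert b (A.erase a) with hA'def
    have hA' : A'.card = k := by
      rw [hA'def, Finset.card_insert_of_notMem hbA', Finset.card_erase_of_mem ha.1, hA]
      omega
    have hstep : (f (i, ⟨A, hA⟩)).1 = (f (i, ⟨A', hA'⟩)).1 := by
      apply fiber_step hk hr hm f hA hA'
      have hsub : A ∪ A' ⊆ insert b A := by
        rw [hA'def]
        apply Finset.union_subset (Finset.subset_insert b A)
        rw [Finset.insert_subset_iff]
        exact ⟨Finset.mem_insert_self b A,
          (Finset.erase_subset a A).trans (Finset.subset_insert b A)⟩
      calc (A ∪ A').card ≤ (insert b A).card := Finset.card_le_card hsub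
        _ ≤ k + 1 := by rw [Finset.card_insert_of_notMem hb.2, hA]
    have hrest : (A' \ B).card ≤ N := by
      have hsub : A' \ B ⊆ (A \ B).erase a := by
        intro x hx
        rw [hA'def, Finset.mem_sdiff, Finset.mem_insert] at hx
        rcases hx.1 with h | h
        · exact absurd (h ▸ hb.1) hx.2
        · rw [Finset.mem_erase, Finset.mem_sdiff]
          exact ⟨(Finset.mem_erase.1 h).1, Finset.mem_of_mem_erase h, hx.2⟩
      have := Finset.card_le_card hsub
      rw [Finset.card_erase_of_mem (Finset.mem_sdiff.2 ha)] at this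
      have hpos : 0 < (A \ B).card := Finset.card_pos.2 ⟨a, Finset.mem_sdiff.2 ha⟩
      omega
    exact hstep.trans (ihN hA' hB hrest)

end fiber

/-- Every automorphism of the incidence graph of `Γ(KG(n,k),r)` is of the form
`(i, A) ↦ (π(i), σ(A))` for a unique pair of permutations `π` of the types and
`σ` of `Ω`, and conversely every such pair induces an automorphism. Hence the
full automorphism group of `Γ(KG(n,k),r)` is isomorphic to `S_Ω × S_r`. -/
theorem aut_incidenceGraph (n k r : ℕ) (hk : 0 < k)
    (hn : 2 * k + 1 ≤ n) (hr : 2 ≤ r) (Ω : Type*) [Fintype Ω] [DecidableEq Ω]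
    (hΩ : Fintype.card Ω = n + k * (r - 2)) :
    (∀ f : incidenceGraph r k Ω ≃g incidenceGraph r k Ω,
      ∃! p : Equiv.Perm (Fin r) × Equiv.Perm Ω,
        ∀ v, (f v).1 = p.1 v.1 ∧
          ((f v).2 : Finset Ω) = (v.2 : Finset Ω).image p.2) ∧
    (∀ p : Equiv.Perm (Fin r) × Equiv.Perm Ω,
      ∃ f : incidenceGraph r k Ω ≃g incidenceGraph r k Ω,
        ∀ v, (f v).1 = p.1 v.1 ∧
          ((f v).2 : Finset Ω) = (v.2 : Finset Ω).image p.2) := by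
  have hmkr : k * r + 1 ≤ Fintype.card Ω := by
    rw [hΩ]
    have h2 : r - 2 + 2 = r := by omega
    have h3 : k * (r - 2) + 2 * k = k * r := by
      calc k * (r-2) + 2*k = k * ((r-2) + 2) := by ring
        _ = k * r := by rw [h2]
    omega
  have hm2k : 2 * k + 1 ≤ Fintype.card Ω := by nlinarith
  constructor
  · -- main direction
    intro f
    obtain ⟨A₀, -, hA₀⟩ := Finset.exists_subset_card_eq
      (show k ≤ (Finset.univ : Finset Ω).card by rw [Finset.card_univ]; omega)
    -- the type permutation
    have htype : ∀ (g : incidenceGraph r k Ω ≃g incidenceGraph r k Ω)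
        (i : Fin r) (A B : Finset Ω) (hA : A.card = k) (hB : B.card = k),
        (g (i, ⟨A, hA⟩)).1 = (g (i, ⟨B, hB⟩)).1 := by
      intro g i A B hA hB
      exact fiber_eq hk hr hmkr g ((A \ B).card) hA hB le_rfl
    have hback : ∀ u v : Fin r × {A : Finset Ω // A.card = k},
        (f u).1 = (f v).1 → u.1 = v.1 := by
      intro u v huv
      have h1 := htype f.symm (f u).1 ((f u).2 : Finset Ω) ((f v).2 : Finset Ω)
        (f u).2.2 (f v).2.2
      have e1 : ((f u).1, (⟨((f u).2 : Finset Ω), (f u).2.2⟩ :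
          {A : Finset Ω // A.card = k})) = f u := by
        exact Prod.ext rfl (Subtype.ext rfl)
      have e2 : ((f u).1, (⟨((f v).2 : Finset Ω), (f v).2.2⟩ :
          {A : Finset Ω // A.card = k})) = f v := by
        exact Prod.ext huv (Subtype.ext rfl)
      rw [e1, e2] at h1
      simpa using h1
    set π0 : Fin r → Fin r := fun i => (f (i, ⟨A₀, hA₀⟩)).1 with hπ0
    have hπ0inj : Function.Injective π0 := by
      intro i j hij
      exact hback (i, ⟨A₀, hA₀⟩) (j, ⟨A₀, hA₀⟩) hij
    set π : Equiv.Perm (Fin r) :=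
      Equiv.ofBijective π0 ((Finite.injective_iff_bijective).1 hπ0inj) with hπ
    have hπapp : ∀ i, π i = π0 i := fun i => rfl
    have htypeπ : ∀ (i : Fin r) (A : Finset Ω) (hA : A.card = k),
        (f (i, ⟨A, hA⟩)).1 = π0 i := fun i A hA => htype f i A A₀ hA hA₀
    -- the set maps
    set Φ : Fin r → Finset Ω → Finset Ω := fun i A =>
      if h : A.card = k then ((f (i, ⟨A, h⟩)).2 : Finset Ω) else ∅ with hΦdef
    have hΦ : ∀ (i : Fin r) (A : Finset Ω) (h : A.card = k),
        Φ i A = ((f (i, ⟨A, h⟩)).2 : Finset Ω) := by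
      intro i A h
      rw [hΦdef]
      simp only [dif_pos h]
    have hΦcard : ∀ (i : Fin r) (A : Finset Ω), A.card = k → (Φ i A).card = k := by
      intro i A h
      rw [hΦ i A h]
      exact (f (i, ⟨A, h⟩)).2.2
    have hcross : ∀ (i j : Fin r), i ≠ j → ∀ (A B : Finset Ω)
        (hA : A.card = k) (hB : B.card = k),
        (Disjoint A B ↔ Disjoint (Φ i A) (Φ j B)) := by
      intro i j hij A B hA hB
      rw [hΦ i A hA, hΦ j B hB]
      constructor
      · intro hD
        exact (f.map_adj_iff.2 (show (incidenceGraph r k Ω).Adj (i, ⟨A, hA⟩) (j, ⟨B, hB⟩)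
          from ⟨hij, hD⟩)).2
      · intro hD
        have hadj : (incidenceGraph r k Ω).Adj (f (i, ⟨A, hA⟩)) (f (j, ⟨B, hB⟩)) := by
          refine ⟨?_, hD⟩
          rw [htypeπ i A hA, htypeπ j B hB]
          exact fun hc => hij (hπ0inj hc)
        exact (f.map_adj_iff.1 hadj).2
    have hΦsurj : ∀ (i : Fin r) (C : Finset Ω), C.card = k →
        ∃ A, A.card = k ∧ Φ i A = C := by
      intro i C hC
      set w := f.symm (π0 i, ⟨C, hC⟩) with hw
      have hw1 : w.1 = i := by
        apply hback w (i, ⟨A₀, hA₀⟩)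
        rw [htypeπ i A₀ hA₀]
        rw [hw]
        simp
      refine ⟨(w.2 : Finset Ω), w.2.2, ?_⟩
      rw [hΦ i (w.2 : Finset Ω) w.2.2]
      have : (w.1, (⟨(w.2 : Finset Ω), w.2.2⟩ : {A : Finset Ω // A.card = k})) = w := by
        rw [Prod.ext_iff]
        exact ⟨rfl, Subtype.ext rfl⟩
      rw [← hw1]
      rw [this, hw]
      simp
    -- Johnson adjacency for each Φ i, hence induced by a permutation
    have hσs : ∀ i : Fin r, ∃ σ : Equiv.Perm Ω, ∀ A : Finset Ω, A.card = k →
        Φ i A = A.image σ := by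
      intro i
      obtain ⟨j, hj⟩ : ∃ j : Fin r, j ≠ i := by
        have : Nontrivial (Fin r) := Fin.nontrivial_iff_two_le.2 hr
        exact exists_ne i
      have hpair := cross_pair hk hm2k (Φ j) (Φ i) (hΦcard j) (hΦcard i)
        (hΦsurj j) (fun A B hA hB => hcross j i hj A B hA hB)
      exact johnson_perm k hk hm2k (Φ i) (hΦcard i) hpair.1 hpair.2
    choose σs hσs' using hσs
    have hagree : ∀ (i j : Fin r), i ≠ j → ∀ (A : Finset Ω), A.card = k →
        A.image (σs i) = A.image (σs j) := by
      intro i j hij A hA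
      apply eq_of_disjoint_class hk (by omega : 2*k ≤ Fintype.card Ω)
        (by rw [Finset.card_image_of_injective A (σs i).injective]; exact hA)
        (by rw [Finset.card_image_of_injective A (σs j).injective]; exact hA)
      intro C hC
      set B := C.image (σs j).symm with hB
      have hBcard : B.card = k := by
        rw [hB, Finset.card_image_of_injective C (σs j).symm.injective, hC]
      have hCB : B.image (σs j) = C := by
        rw [hB, Finset.image_image]
        have : (σs j) ∘ (σs j).symm = id := by
          funext x
          simp
        rw [this, Finset.image_id]
      have h1 : Disjoint C (A.image (σs i)) ↔ Disjoint A B := by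
        rw [← hCB, ← hσs' i A hA, ← hσs' j B hBcard, disjoint_comm]
        exact (hcross i j hij A B hA hBcard).symm
      have h2 : Disjoint C (A.image (σs j)) ↔ Disjoint A B := by
        rw [← hCB, disjoint_comm, Finset.disjoint_image (σs j).injective]
      rw [h1, h2]
    set i₀ : Fin r := ⟨0, by omega⟩ with hi₀
    set σ := σs i₀ with hσ
    have hkey : ∀ v : Fin r × {A : Finset Ω // A.card = k},
        (f v).1 = π v.1 ∧ ((f v).2 : Finset Ω) = (v.2 : Finset Ω).image σ := by
      rintro ⟨i, A, hA⟩
      constructor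
      · exact htypeπ i A hA
      · show ((f (i, ⟨A, hA⟩)).2 : Finset Ω) = A.image σ
        rw [← hΦ i A hA, hσs' i A hA]
        by_cases hii : i = i₀
        · rw [hii, hσ]
        · rw [hσ]
          exact hagree i i₀ hii A hA
    refine ⟨(π, σ), hkey, ?_⟩
    rintro ⟨π', σ'⟩ hq
    have hq1 : π' = π := by
      apply Equiv.ext
      intro i
      have := (hq (i, ⟨A₀, hA₀⟩)).1
      rw [(hkey (i, ⟨A₀, hA₀⟩)).1] at this
      exact this.symm
    have hq2 : σ' = σ := by
      apply perm_eq_of_image_eq hk (by omega : k + 1 ≤ Fintype.card Ω)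
      intro A hA
      have h1 := (hq (i₀, ⟨A, hA⟩)).2
      have h2 := (hkey (i₀, ⟨A, hA⟩)).2
      rw [h2] at h1
      exact h1.symm
    rw [hq1, hq2]
  · -- converse direction
    rintro ⟨π, σ⟩
    let es : {A : Finset Ω // A.card = k} ≃ {A : Finset Ω // A.card = k} :=
      (Equiv.finsetCongr σ).subtypeEquiv (by
        intro A
        rw [Equiv.finsetCongr_apply, Finset.card_map])
    refine ⟨⟨Equiv.prodCongr π es, ?_⟩, ?_⟩
    · intro X Y
      show (incidenceGraph r k Ω).Adj _ _ ↔ (incidenceGraph r k Ω).Adj X Y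
      obtain ⟨i, A, hA⟩ := X
      obtain ⟨j, B, hB⟩ := Y
      simp only [incidenceGraph, Equiv.prodCongr_apply, Prod.map, es,
        Equiv.subtypeEquiv_apply, Equiv.finsetCongr_apply]
      constructor
      · rintro ⟨h1, h2⟩
        exact ⟨fun hc => h1 (by rw [hc]), by rwa [Finset.disjoint_map] at h2⟩
      · rintro ⟨h1, h2⟩
        exact ⟨fun hc => h1 (π.injective hc), by rwa [Finset.disjoint_map]⟩
    · intro v
      obtain ⟨i, A, hA⟩ := v
      constructor
      · rfl
      · show (es ⟨A, hA⟩ : Finset Ω) = A.image σ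
        simp only [es, Equiv.subtypeEquiv_apply, Equiv.finsetCongr_apply]
        rw [Finset.map_eq_image]
        rfl
end
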